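/- arXiv:2503.14569 — 7 statements merged into one kernel-verified Lean document; each statement's English description precedes it below -/
import Mathlib

section
/- Let E : ℝ^d → ℝ be continuously differentiable with Z = ∫_{ℝ^d} exp(−E(y)) dy ∈ (0, ∞), and let p(y) = exp(−E(y))/Z be the associated Boltzmann probability density. Fix α > 0 and σ > 0 and a point x ∈ ℝ^d, and assume that the functions y ↦ p(y)·φ_{α,σ}(x', y) and y ↦ ‖∇E(y)‖·p(y)·φ_{α,σ}(x', y) are integrable for all x' in a neighborhood of x, that p(y)·φ_{α,σ}(x, y) → 0 as ‖y‖ → ∞, and that differentiation under the integral sign in x is justified by an integrable dominating function. Then the score of the noised marginal satisfies ∇_x log p_{α,σ}(x) = (1/α) · ∫_{ℝ^d} (−∇E(y)) · p(y | x) dy, i.e., the score at noise level (α, σ) equals (1/α) times the posterior expectation of the force −∇E evaluated at the clean sample. -/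
open MeasureTheory Filter
open InnerProductSpace

/-- The (unnormalized) Gaussian transition kernel
`φ_{α,σ}(x, y) = exp(−‖x − α·y‖²/(2σ²))`. -/
noncomputable def gaussKernel (d : ℕ) (α σ : ℝ)
    (x y : EuclideanSpace ℝ (Fin d)) : ℝ :=
  Real.exp (-‖x - α • y‖ ^ 2 / (2 * σ ^ 2))

/-- If `g : ℝ^d → ℝ` is `C¹`, integrable, and its directional derivative in the
direction `v` is integrable, then the integral of that directional derivative vanishes. -/
lemma integral_fderiv_apply_eq_zero {d : ℕ} (g : EuclideanSpace ℝ (Fin d) → ℝ)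
    (hg : ContDiff ℝ 1 g) (hgi : Integrable g) (v : EuclideanSpace ℝ (Fin d))
    (hgi' : Integrable (fun y => fderiv ℝ g y v)) :
    (∫ y, fderiv ℝ g y v) = 0 := by
  set f : EuclideanSpace ℝ (Fin d) → ℝ := fun y => fderiv ℝ g y v with hf
  have hfc : Continuous f := (hg.continuous_fderiv one_ne_zero).clm_apply continuous_const
  have hD : Continuous fun q : EuclideanSpace ℝ (Fin d) × ℝ => f (q.1 + q.2 • v) :=
    hfc.comp (continuous_fst.add (continuous_snd.smul continuous_const))
  have key : ∀ s : ℝ, (∫ y, f (y + s • v)) = ∫ y, f y := fun s =>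
    integral_add_right_eq_self f (s • v)
  have keyn : ∀ s : ℝ, (∫ y, ‖f (y + s • v)‖) = ∫ y, ‖f y‖ := fun s =>
    integral_add_right_eq_self (fun y => ‖f y‖) (s • v)
  have ftc : ∀ y, (∫ s in (0:ℝ)..1, f (y + s • v)) = g (y + v) - g y := by
    intro y
    have hder : ∀ s ∈ Set.uIcc (0:ℝ) 1,
        HasDerivAt (fun s : ℝ => g (y + s • v)) (f (y + s • v)) s := by
      intro s _
      have h1 : HasDerivAt (fun s : ℝ => y + s • v) v s := by
        simpa using ((hasDerivAt_id s).smul_const v).const_add y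
      exact ((hg.differentiable one_ne_zero).differentiableAt.hasFDerivAt).comp_hasDerivAt s h1
    have hint : IntervalIntegrable (fun s : ℝ => f (y + s • v)) volume 0 1 :=
      (hfc.comp (continuous_const.add (continuous_id.smul continuous_const))).intervalIntegrable 0 1
    rw [intervalIntegral.integral_eq_sub_of_hasDerivAt hder hint]
    simp
  have sub0 : (∫ y, (g (y + v) - g y)) = 0 := by
    rw [integral_sub (hgi.comp_add_right v) hgi, integral_add_right_eq_self, sub_self]
  have h0 : (∫ y, ∫ s in Set.Ioc (0:ℝ) 1, f (y + s • v)) = 0 := by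
    have : ∀ y, (∫ s in Set.Ioc (0:ℝ) 1, f (y + s • v)) = g (y + v) - g y := by
      intro y
      rw [← intervalIntegral.integral_of_le (zero_le_one)]
      exact ftc y
    simp_rw [this]
    exact sub0
  haveI : IsFiniteMeasure (volume.restrict (Set.Ioc (0:ℝ) 1)) := by
    constructor
    simp [Real.volume_Ioc]
  have hprod : Integrable (fun q : EuclideanSpace ℝ (Fin d) × ℝ => f (q.1 + q.2 • v))
      (volume.prod (volume.restrict (Set.Ioc (0:ℝ) 1))) := by
    rw [integrable_prod_iff' hD.aestronglyMeasurable]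
    constructor
    · refine Filter.Eventually.of_forall fun s => ?_
      exact hgi'.comp_add_right (s • v)
    · refine (integrable_const (∫ y, ‖f y‖)).congr ?_
      refine Filter.Eventually.of_forall fun s => ?_
      exact (keyn s).symm
  have swap := integral_integral_swap (f := fun y s => f (y + s • v)) hprod
  rw [swap] at h0
  have : (∫ s in Set.Ioc (0:ℝ) 1, ∫ y, f (y + s • v)) = ∫ y, f y := by
    simp_rw [key]
    simp [Real.volume_Ioc]
  rw [this] at h0
  exact h0

/-- The gradient in `x` of `x ↦ c · φ_{α,σ}(x, y)`. -/
lemma grad_x_integrand {d : ℕ} {α σ : ℝ} (hσ : σ ≠ 0) (c : ℝ)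
    (y x' : EuclideanSpace ℝ (Fin d)) :
    HasGradientAt (fun x'' => c * gaussKernel d α σ x'' y)
      (((σ ^ 2)⁻¹ * (c * gaussKernel d α σ x' y)) • (α • y - x')) x' := by
  simp only [gaussKernel, div_eq_mul_inv]
  have h1 : HasFDerivAt (fun x'' : EuclideanSpace ℝ (Fin d) => ‖x'' - α • y‖ ^ 2)
      (2 • (innerSL ℝ (x' - α • y)).comp (ContinuousLinearMap.id ℝ _)) x' :=
    ((hasFDerivAt_id x').sub_const _).norm_sq
  have h2 := ((h1.neg.mul_const ((2 * σ ^ 2)⁻¹)).exp).const_mul c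
  rw [hasGradientAt_iff_hasFDerivAt]
  refine h2.congr_fderiv (Eq.symm ?_)
  ext v
  rw [toDual_apply_apply, real_inner_smul_left]
  simp only [ContinuousLinearMap.smul_apply, ContinuousLinearMap.neg_apply,
    ContinuousLinearMap.coe_smul', Pi.smul_apply, Pi.neg_apply, ContinuousLinearMap.comp_apply,
    ContinuousLinearMap.coe_id', id_eq, innerSL_apply_apply, nsmul_eq_mul, smul_eq_mul,
    Nat.cast_ofNat]
  simp only [inner_sub_left, inner_neg_right, real_inner_smul_left, real_inner_smul_right,
    inner_smul_left, inner_smul_right, conj_trivial]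
  have hσ2 : σ ^ 2 ≠ 0 := pow_ne_zero 2 hσ
  field_simp
  ring

/-- The gradient in `y` of `y ↦ φ_{α,σ}(x, y)`. -/
lemma grad_y_integrand {d : ℕ} {α σ : ℝ} (hσ : σ ≠ 0) (x y : EuclideanSpace ℝ (Fin d)) :
    HasGradientAt (fun y' => gaussKernel d α σ x y')
      ((α * (σ ^ 2)⁻¹ * gaussKernel d α σ x y) • (x - α • y)) y := by
  simp only [gaussKernel, div_eq_mul_inv]
  have h0 : HasFDerivAt (fun y' : EuclideanSpace ℝ (Fin d) => x - α • y')
      (-(α • ContinuousLinearMap.id ℝ (EuclideanSpace ℝ (Fin d)))) y := by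
    simpa using ((hasFDerivAt_id y).const_smul α).const_sub x
  have h2 := (h0.norm_sq.neg.mul_const ((2 * σ ^ 2)⁻¹)).exp
  rw [hasGradientAt_iff_hasFDerivAt]
  refine h2.congr_fderiv (Eq.symm ?_)
  ext v
  rw [toDual_apply_apply, real_inner_smul_left]
  simp only [ContinuousLinearMap.smul_apply, ContinuousLinearMap.neg_apply,
    ContinuousLinearMap.mul_apply', ContinuousLinearMap.coe_smul', Pi.smul_apply, Pi.neg_apply,
    ContinuousLinearMap.comp_apply, ContinuousLinearMap.coe_id', id_eq, innerSL_apply_apply,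
    nsmul_eq_mul, smul_eq_mul, Nat.cast_ofNat]
  simp only [inner_sub_left, inner_neg_right, real_inner_smul_left, real_inner_smul_right,
    inner_smul_left, inner_smul_right, conj_trivial]
  ring

/-- **Score of the noised Boltzmann marginal as a posterior force average.**
Let `E : ℝ^d → ℝ` be `C¹` with `Z = ∫ exp(−E(y)) dy ∈ (0, ∞)` and let
`p(y) = exp(−E(y))/Z` be the associated Boltzmann density.  Fix `α > 0`, `σ > 0` and
`x ∈ ℝ^d`; assume `y ↦ p(y)φ_{α,σ}(x', y)` and `y ↦ ‖∇E(y)‖ p(y) φ_{α,σ}(x', y)` are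
integrable for `x'` near `x`, that `p(y) φ_{α,σ}(x, y) → 0` as `‖y‖ → ∞`, and that
differentiation under the integral sign in `x` is justified by an integrable
dominating function.  Then
`∇_x log p_{α,σ}(x) = (1/α) ∫ (−∇E(y)) p(y | x) dy`. -/
theorem score_eq_posterior_force_average (d : ℕ)
    (E : EuclideanSpace ℝ (Fin d) → ℝ) (hE : ContDiff ℝ 1 E)
    (hZint : Integrable (fun y => Real.exp (-E y)))
    (hZpos : 0 < ∫ y, Real.exp (-E y))
    (α σ : ℝ) (hα : 0 < α) (hσ : 0 < σ)
    (x : EuclideanSpace ℝ (Fin d))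
    (p : EuclideanSpace ℝ (Fin d) → ℝ)
    (hp : p = fun y => Real.exp (-E y) / ∫ z, Real.exp (-E z))
    (hInt1 : ∀ᶠ x' in nhds x, Integrable (fun y => p y * gaussKernel d α σ x' y))
    (hInt2 : ∀ᶠ x' in nhds x,
      Integrable (fun y => ‖gradient E y‖ * (p y * gaussKernel d α σ x' y)))
    (hTail : Tendsto (fun y => p y * gaussKernel d α σ x y) (cocompact _) (nhds 0))
    (hDom : ∃ (ε : ℝ) (bound : EuclideanSpace ℝ (Fin d) → ℝ), 0 < ε ∧
      Integrable bound ∧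
      ∀ y, ∀ x' ∈ Metric.ball x ε,
        ‖gradient (fun x'' => p y * gaussKernel d α σ x'' y) x'‖ ≤ bound y) :
    gradient (fun x' => Real.log (∫ y, p y * gaussKernel d α σ x' y)) x
      = (1 / α) • ∫ y,
          ((p y * gaussKernel d α σ x y) / ∫ z, p z * gaussKernel d α σ x z) •
            (-(gradient E y)) := by
  
  obtain ⟨ε, bound, hε, hbint, hbd⟩ := hDom
  have hσ0 : σ ≠ 0 := ne_of_gt hσ
  have hα0 : α ≠ 0 := ne_of_gt hα
  -- continuity facts
  have hpc : Continuous p := by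
    rw [hp]; exact (Real.continuous_exp.comp hE.continuous.neg).div_const _
  have hppos : ∀ y, 0 < p y := by
    intro y; rw [hp]; exact div_pos (Real.exp_pos _) hZpos
  have hKc : ∀ x', Continuous fun y => gaussKernel d α σ x' y := by
    intro x'
    exact Real.continuous_exp.comp
      ((((continuous_const.sub (continuous_id.const_smul α)).norm.pow 2).neg).div_const _)
  have hKpos : ∀ x' y, 0 < gaussKernel d α σ x' y := fun x' y => Real.exp_pos _
  have hgEc : Continuous (gradient E) :=
    (LinearIsometryEquiv.continuous _).comp (hE.continuous_fderiv one_ne_zero)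
  set g : EuclideanSpace ℝ (Fin d) → ℝ := fun y => p y * gaussKernel d α σ x y with hgdef
  have hgc : Continuous g := hpc.mul (hKc x)
  have hgpos : ∀ y, 0 < g y := fun y => mul_pos (hppos y) (hKpos x y)
  set G1 : EuclideanSpace ℝ (Fin d) → EuclideanSpace ℝ (Fin d) :=
    fun y => ((σ ^ 2)⁻¹ * g y) • (α • y - x) with hG1def
  set G2 : EuclideanSpace ℝ (Fin d) → EuclideanSpace ℝ (Fin d) :=
    fun y => g y • (-gradient E y) with hG2def
  have hG1c : Continuous G1 :=
    (continuous_const.mul hgc).smul ((continuous_id.const_smul α).sub continuous_const)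
  have hG2c : Continuous G2 := hgc.smul hgEc.neg
  -- gradient in x of the integrand
  have hgrad_x : ∀ y x', HasGradientAt (fun x'' => p y * gaussKernel d α σ x'' y)
      (((σ ^ 2)⁻¹ * (p y * gaussKernel d α σ x' y)) • (α • y - x')) x' :=
    fun y x' => grad_x_integrand hσ0 (p y) y x'
  have hgradval : ∀ y x', gradient (fun x'' => p y * gaussKernel d α σ x'' y) x'
      = ((σ ^ 2)⁻¹ * (p y * gaussKernel d α σ x' y)) • (α • y - x') :=
    fun y x' => (hgrad_x y x').gradient
  have hG1bd : ∀ y, ‖G1 y‖ ≤ bound y := by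
    intro y
    have h := hbd y x (Metric.mem_ball_self hε)
    rwa [hgradval y x] at h
  have hG1int : Integrable G1 :=
    Integrable.mono' hbint hG1c.aestronglyMeasurable (Eventually.of_forall hG1bd)
  have hgint : Integrable g := hInt1.self_of_nhds
  have hG2int : Integrable G2 := by
    refine Integrable.mono' hInt2.self_of_nhds hG2c.aestronglyMeasurable
      (Eventually.of_forall fun y => ?_)
    rw [hG2def]
    rw [norm_smul, norm_neg, Real.norm_eq_abs, abs_of_pos (hgpos y), mul_comm]
  -- smoothness of g
  have hpC1 : ContDiff ℝ 1 p := by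
    rw [hp]; exact (Real.contDiff_exp.comp hE.neg).div_const _
  have hKC1 : ContDiff ℝ 1 fun y => gaussKernel d α σ x y := by
    refine Real.contDiff_exp.comp ?_
    refine ContDiff.div_const ?_ _
    refine ContDiff.neg ?_
    exact (contDiff_const.sub (contDiff_id.const_smul α)).norm_sq ℝ
  have hgC1 : ContDiff ℝ 1 g := hpC1.mul hKC1
  -- gradient of p
  have hpg : ∀ y, HasGradientAt p (-(p y) • gradient E y) y := by
    intro y
    have hEd : HasGradientAt E (gradient E y) y :=
      (hE.differentiable one_ne_zero y).hasGradientAt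
    have h1 := (hEd.hasFDerivAt.neg.exp).mul_const (∫ z, Real.exp (-E z))⁻¹
    rw [hp]
    simp only [div_eq_mul_inv]
    rw [hasGradientAt_iff_hasFDerivAt]
    refine h1.congr_fderiv (Eq.symm ?_)
    ext v
    rw [toDual_apply_apply, real_inner_smul_left]
    simp only [ContinuousLinearMap.smul_apply, ContinuousLinearMap.neg_apply,
      ContinuousLinearMap.coe_smul', Pi.smul_apply, Pi.neg_apply, smul_eq_mul, toDual_apply_apply]
    ring
  -- gradient in y of g
  have hgrad_y : ∀ y, HasGradientAt g (G2 y - α • G1 y) y := by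
    intro y
    have hK := grad_y_integrand (α := α) hσ0 x y
    have hmul := (hpg y).hasFDerivAt.mul hK.hasFDerivAt
    rw [hasGradientAt_iff_hasFDerivAt]
    refine hmul.congr_fderiv (Eq.symm ?_)
    rw [hG2def, hG1def, hgdef]
    ext v
    rw [toDual_apply_apply]
    simp only [inner_sub_left, inner_smul_left, inner_neg_left, conj_trivial,
      ContinuousLinearMap.add_apply, ContinuousLinearMap.smul_apply, toDual_apply_apply,
      smul_eq_mul, inner_smul_right, inner_sub_right, inner_neg_right]
    ring
  -- integration by parts
  have hsmul : Integrable (fun y => α • G1 y) := hG1int.smul α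
  have hsub : Integrable (fun y => G2 y - α • G1 y) := hG2int.sub hsmul
  have ibp : (∫ y, G2 y) = α • ∫ y, G1 y := by
    have hfd : ∀ y, fderiv ℝ g y = toDual ℝ _ (G2 y - α • G1 y) := fun y =>
      (hgrad_y y).hasFDerivAt.fderiv
    have hz : ∀ v, (∫ y, ⟪G2 y - α • G1 y, v⟫_ℝ) = 0 := by
      intro v
      have hiv : Integrable (fun y => fderiv ℝ g y v) := by
        refine Integrable.mono' (hsub.norm.mul_const ‖v‖)
          ?_ (Eventually.of_forall fun y => ?_)
        · refine Continuous.aestronglyMeasurable ?_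
          have : Continuous fun y => ⟪G2 y - α • G1 y, v⟫_ℝ :=
            (hG2c.sub (hG1c.const_smul α)).inner continuous_const
          refine this.congr fun y => ?_
          rw [hfd y, toDual_apply_apply]
        · rw [hfd y]
          simp only [toDual_apply_apply, Real.norm_eq_abs]
          exact abs_real_inner_le_norm _ _
      have h0 := integral_fderiv_apply_eq_zero g hgC1 hgint v hiv
      rw [← h0]
      congr 1
      ext y
      rw [hfd y, toDual_apply_apply]
    set W := ∫ y, (G2 y - α • G1 y) with hW
    have hWz : W = 0 := by
      have h1 : ⟪W, W⟫_ℝ = 0 := by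
        rw [← integral_inner hsub W]
        rw [← hz W]
        congr 1
        ext y
        exact real_inner_comm _ _
      exact inner_self_eq_zero.mp h1
    have h2 : (∫ y, G2 y) - ∫ y, α • G1 y = 0 := by
      rw [← integral_sub hG2int hsmul]
      exact hWz
    rw [sub_eq_zero] at h2
    rw [h2, integral_smul]
  -- differentiation under the integral sign
  set m := ∫ y, g y with hm
  have hmpos : 0 < m := by
    rw [hm]
    refine (integral_pos_iff_support_of_nonneg (fun y => (hgpos y).le) hgint).mpr ?_
    have hsupp : Function.support g = Set.univ :=
      Set.eq_univ_of_forall fun y => ne_of_gt (hgpos y)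
    rw [hsupp]
    exact isOpen_univ.measure_pos volume ⟨0, trivial⟩
  set F' : EuclideanSpace ℝ (Fin d) → EuclideanSpace ℝ (Fin d) →
      (EuclideanSpace ℝ (Fin d) →L[ℝ] ℝ) := fun x' y =>
    toDual ℝ _ (((σ ^ 2)⁻¹ * (p y * gaussKernel d α σ x' y)) • (α • y - x')) with hF'def
  have hF'c : ∀ x', Continuous (F' x') := by
    intro x'
    rw [hF'def]
    exact (LinearIsometryEquiv.continuous _).comp
      ((continuous_const.mul (hpc.mul (hKc x'))).smul
        ((continuous_id.const_smul α).sub continuous_const))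
  have hF'norm : ∀ x' y, ‖F' x' y‖
      = ‖(((σ ^ 2)⁻¹ * (p y * gaussKernel d α σ x' y)) • (α • y - x'))‖ := by
    intro x' y
    rw [hF'def]
    exact LinearIsometryEquiv.norm_map _ _
  have hderivF : HasFDerivAt (fun x' => ∫ y, p y * gaussKernel d α σ x' y)
      (∫ y, F' x y) x := by
    refine hasFDerivAt_integral_of_dominated_of_fderiv_le (Metric.ball_mem_nhds x hε)
      (Eventually.of_forall fun x' => (hpc.mul (hKc x')).aestronglyMeasurable)
      hgint (hF'c x).aestronglyMeasurable
      (Eventually.of_forall fun y => ?_) hbint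
      (Eventually.of_forall fun y => ?_)
    · intro x' hx'
      rw [hF'norm x' y]
      have h := hbd y x' hx'
      rwa [hgradval y x'] at h
    · intro x' _
      exact (hgrad_x y x').hasFDerivAt
  have hF'int : Integrable (F' x) := by
    refine Integrable.mono' hbint (hF'c x).aestronglyMeasurable
      (Eventually.of_forall fun y => ?_)
    rw [hF'norm x y]
    exact hG1bd y
  have hDFval : (∫ y, F' x y) = toDual ℝ _ (∫ y, G1 y) := by
    refine ContinuousLinearMap.ext fun v => ?_
    rw [ContinuousLinearMap.integral_apply hF'int v, toDual_apply_apply, real_inner_comm,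
      ← integral_inner hG1int v]
    congr 1
    ext y
    rw [hF'def]
    simp only [toDual_apply_apply]
    rw [hG1def, hgdef]
    exact real_inner_comm _ _
  rw [hDFval] at hderivF
  -- gradient of the log marginal
  have hlog : HasGradientAt (fun x' => Real.log (∫ y, p y * gaussKernel d α σ x' y))
      (m⁻¹ • ∫ y, G1 y) x := by
    have hcomp := (Real.hasDerivAt_log (ne_of_gt hmpos)).comp_hasFDerivAt x hderivF
    rw [hasGradientAt_iff_hasFDerivAt]
    refine hcomp.congr_fderiv (Eq.symm ?_)
    ext v
    rw [toDual_apply_apply, real_inner_smul_left]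
    simp only [ContinuousLinearMap.smul_apply, smul_eq_mul, toDual_apply_apply]
  rw [hlog.gradient]
  -- compute the right-hand side
  have hRHS : (fun y => ((p y * gaussKernel d α σ x y) / ∫ z, p z * gaussKernel d α σ x z) •
      (-(gradient E y))) = fun y => m⁻¹ • G2 y := by
    funext y
    rw [hG2def, hgdef]
    rw [div_eq_inv_mul, mul_smul]
  rw [hRHS, integral_smul, ibp, smul_smul, smul_smul]
  congr 1
  field_simp
end

section
/- Let p : ℝ^d → ℝ be a continuously differentiable probability density, α > 0, σ > 0, and x ∈ ℝ^d. Assume that y ↦ p(y)·φ_{α,σ}(x', y) and y ↦ ‖∇p(y)‖·φ_{α,σ}(x', y) are integrable for all x' in a neighborhood of x, that p(y)·φ_{α,σ}(x, y) → 0 as ‖y‖ → ∞, and that differentiation under the integral sign in x is justified by an integrable dominating function. Then ∇_x ∫_{ℝ^d} p(y) φ_{α,σ}(x, y) dy = (1/α) · ∫_{ℝ^d} (∇p)(y) · φ_{α,σ}(x, y) dy. -/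
open MeasureTheory Filter

open scoped RealInnerProductSpace

lemma gaussKernel_hasFDerivAt_fst (d : ℕ) (α σ : ℝ) (x y : EuclideanSpace ℝ (Fin d)) :
    HasFDerivAt (fun x' => gaussKernel d α σ x' y)
      ((-(gaussKernel d α σ x y) / σ ^ 2) •
        (innerSL ℝ (x - α • y) : EuclideanSpace ℝ (Fin d) →L[ℝ] ℝ)) x := by
  have h0 : HasFDerivAt (fun x' : EuclideanSpace ℝ (Fin d) => x' - α • y)
      (ContinuousLinearMap.id ℝ _) x := (hasFDerivAt_id x).sub_const (α • y)
  have h1 := (h0.inner ℝ h0)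
  have h2 := (h1.const_mul (-(1/(2 * σ ^ 2)))).exp
  have heq : (fun x' : EuclideanSpace ℝ (Fin d) =>
      Real.exp ((-(1/(2 * σ ^ 2))) * ⟪x' - α • y, x' - α • y⟫))
      = fun x' => gaussKernel d α σ x' y := by
    funext x'
    rw [real_inner_self_eq_norm_sq, gaussKernel]
    congr 1
    ring
  rw [heq] at h2
  refine h2.congr_fderiv ?_
  ext v
  simp only [ContinuousLinearMap.smul_apply, ContinuousLinearMap.comp_apply,
    ContinuousLinearMap.prod_apply, ContinuousLinearMap.coe_id', id_eq,
    fderivInnerCLM_apply, innerSL_apply_apply, smul_eq_mul, gaussKernel,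
    real_inner_self_eq_norm_sq]
  rw [real_inner_comm v (x - α • y)]
  have harg : -(1/(2*σ^2)) * ‖x - α • y‖ ^ 2 = -‖x - α • y‖ ^ 2 / (2 * σ ^ 2) := by ring
  rw [harg]
  ring

lemma gaussKernel_hasFDerivAt_snd (d : ℕ) (α σ : ℝ) (x y : EuclideanSpace ℝ (Fin d)) :
    HasFDerivAt (fun y' => gaussKernel d α σ x y')
      ((α * gaussKernel d α σ x y / σ ^ 2) •
        (innerSL ℝ (x - α • y) : EuclideanSpace ℝ (Fin d) →L[ℝ] ℝ)) y := by
  have h0 : HasFDerivAt (fun y' : EuclideanSpace ℝ (Fin d) => x - α • y')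
      (-(α • ContinuousLinearMap.id ℝ _)) y := by
    have := ((hasFDerivAt_id (𝕜 := ℝ) y).const_smul (α : ℝ)).const_sub x
    simpa using this
  have h1 := (h0.inner ℝ h0)
  have h2 := (h1.const_mul (-(1/(2 * σ ^ 2)))).exp
  have heq : (fun y' : EuclideanSpace ℝ (Fin d) =>
      Real.exp ((-(1/(2 * σ ^ 2))) * ⟪x - α • y', x - α • y'⟫))
      = fun y' => gaussKernel d α σ x y' := by
    funext y'
    rw [real_inner_self_eq_norm_sq, gaussKernel]
    congr 1
    ring
  rw [heq] at h2
  refine h2.congr_fderiv ?_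
  ext v
  simp only [ContinuousLinearMap.smul_apply, ContinuousLinearMap.comp_apply,
    ContinuousLinearMap.prod_apply, ContinuousLinearMap.coe_id', id_eq,
    ContinuousLinearMap.neg_apply, fderivInnerCLM_apply, innerSL_apply_apply, smul_eq_mul,
    gaussKernel, real_inner_self_eq_norm_sq, inner_neg_right, inner_neg_left,
    real_inner_smul_left, real_inner_smul_right]
  rw [real_inner_comm v (x - α • y)]
  have harg : -(1/(2*σ^2)) * ‖x - α • y‖ ^ 2 = -‖x - α • y‖ ^ 2 / (2 * σ ^ 2) := by ring
  rw [harg]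
  ring

/-- **Gradient of the noised marginal via integration by parts.**
Let `p : ℝ^d → ℝ` be a `C¹` probability density, `α > 0`, `σ > 0`, `x ∈ ℝ^d`.
Assume `y ↦ p(y)φ_{α,σ}(x', y)` and `y ↦ ‖∇p(y)‖φ_{α,σ}(x', y)` are integrable for
all `x'` near `x`, that `p(y)φ_{α,σ}(x, y) → 0` as `‖y‖ → ∞`, and that
differentiation under the integral sign in `x` is justified by an integrable
dominating function.  Then
`∇_x ∫ p(y) φ_{α,σ}(x, y) dy = (1/α) ∫ (∇p)(y) φ_{α,σ}(x, y) dy`. -/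
theorem gradient_noised_marginal_eq_smoothed_gradient (d : ℕ)
    (p : EuclideanSpace ℝ (Fin d) → ℝ) (hp : ContDiff ℝ 1 p)
    (hp0 : ∀ y, 0 ≤ p y) (hpI : Integrable p) (hpP : ∫ y, p y = 1)
    (α σ : ℝ) (hα : 0 < α) (hσ : 0 < σ)
    (x : EuclideanSpace ℝ (Fin d))
    (hInt1 : ∀ᶠ x' in nhds x, Integrable (fun y => p y * gaussKernel d α σ x' y))
    (hInt2 : ∀ᶠ x' in nhds x,
      Integrable (fun y => ‖gradient p y‖ * gaussKernel d α σ x' y))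
    (hTail : Tendsto (fun y => p y * gaussKernel d α σ x y) (cocompact _) (nhds 0))
    (hDom : ∃ (ε : ℝ) (bound : EuclideanSpace ℝ (Fin d) → ℝ), 0 < ε ∧
      Integrable bound ∧
      ∀ y, ∀ x' ∈ Metric.ball x ε,
        ‖gradient (fun x'' => p y * gaussKernel d α σ x'' y) x'‖ ≤ bound y) :
    gradient (fun x' => ∫ y, p y * gaussKernel d α σ x' y) x
      = (1 / α) • ∫ y, gaussKernel d α σ x y • gradient p y := by
  classical
  obtain ⟨ε, bound, hε, hbi, hb⟩ := hDom
  -- the pointwise derivative in x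
  set F' : EuclideanSpace ℝ (Fin d) → EuclideanSpace ℝ (Fin d) →
      (EuclideanSpace ℝ (Fin d) →L[ℝ] ℝ) := fun x' y =>
    p y • ((-(gaussKernel d α σ x' y) / σ ^ 2) • (innerSL ℝ (x' - α • y))) with hF'
  have hderiv : ∀ (x' y : EuclideanSpace ℝ (Fin d)), HasFDerivAt (fun x'' => p y * gaussKernel d α σ x'' y)
      (F' x' y) x' := fun x' y =>
    (gaussKernel_hasFDerivAt_fst d α σ x' y).const_mul (p y)
  have hFnorm : ∀ (x' y : EuclideanSpace ℝ (Fin d)),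
      ‖gradient (fun x'' => p y * gaussKernel d α σ x'' y) x'‖ = ‖F' x' y‖ := by
    intro x' y
    rw [gradient, (hderiv x' y).fderiv]
    exact LinearIsometryEquiv.norm_map _ _
  have hF'bound : ∀ y, ∀ x' ∈ Metric.ball x ε, ‖F' x' y‖ ≤ bound y := by
    intro y x' hx'
    rw [← hFnorm x' y]
    exact hb y x' hx'
  -- continuity / measurability of F' x
  have hF'cont : Continuous (F' x) := by
    apply Continuous.smul hp.continuous
    apply Continuous.smul (f := fun y => -gaussKernel d α σ x y / σ ^ 2)
      (g := fun y => innerSL ℝ (x - α • y))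
    · have : Continuous (fun y : EuclideanSpace ℝ (Fin d) => gaussKernel d α σ x y) := by
        unfold gaussKernel
        fun_prop
      fun_prop
    · exact (innerSL ℝ).continuous.comp (by fun_prop)
  have hF'int : Integrable (F' x) := by
    refine Integrable.mono' hbi hF'cont.aestronglyMeasurable ?_
    exact Eventually.of_forall fun y => hF'bound y x (Metric.mem_ball_self hε)
  -- differentiate under the integral sign
  have hmain : HasFDerivAt (fun x' => ∫ y, p y * gaussKernel d α σ x' y)
      (∫ y, F' x y) x := by
    apply hasFDerivAt_integral_of_dominated_of_fderiv_le (Metric.ball_mem_nhds x hε)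
      (hInt1.mono fun x' h => h.aestronglyMeasurable) hInt1.self_of_nhds
      hF'cont.aestronglyMeasurable
      (Eventually.of_forall fun y => fun x' hx' => hF'bound y x' hx') hbi
    exact Eventually.of_forall fun y x' hx' => hderiv x' y
  -- integrability facts at x
  have hI1 : Integrable (fun y => p y * gaussKernel d α σ x y) := hInt1.self_of_nhds
  have hI2 : Integrable (fun y => ‖gradient p y‖ * gaussKernel d α σ x y) :=
    hInt2.self_of_nhds
  have hgκ : Continuous (fun y : EuclideanSpace ℝ (Fin d) => gaussKernel d α σ x y) := by
    unfold gaussKernel; fun_prop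
  have hκpos : ∀ x' y : EuclideanSpace ℝ (Fin d), 0 < gaussKernel d α σ x' y :=
    fun _ _ => Real.exp_pos _
  have hgradc : Continuous (gradient p) := by
    have : Continuous (fun y => (InnerProductSpace.toDual ℝ
        (EuclideanSpace ℝ (Fin d))).symm (fderiv ℝ p y)) :=
      (InnerProductSpace.toDual ℝ _).symm.continuous.comp (hp.continuous_fderiv one_ne_zero)
    exact this
  have hIsm : Integrable (fun y => gaussKernel d α σ x y • gradient p y) := by
    refine Integrable.mono' hI2 (hgκ.smul hgradc).aestronglyMeasurable ?_
    refine Eventually.of_forall fun y => le_of_eq ?_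
    rw [norm_smul, Real.norm_eq_abs, abs_of_pos (hκpos x y)]
    ring
  -- prove equality of gradients via inner products
  apply ext_inner_right ℝ
  intro v
  rw [gradient, InnerProductSpace.toDual_symm_apply, hmain.fderiv]
  rw [ContinuousLinearMap.integral_apply hF'int]
  -- pointwise rewrite of the integrand
  have hpw : ∀ y : EuclideanSpace ℝ (Fin d), F' x y v
      = (-(1 / α)) * (p y * fderiv ℝ (fun y' => gaussKernel d α σ x y') y v) := by
    intro y
    rw [(gaussKernel_hasFDerivAt_snd d α σ x y).fderiv]
    simp only [hF', ContinuousLinearMap.smul_apply, innerSL_apply_apply, smul_eq_mul]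
    field_simp
  rw [integral_congr_ae (Eventually.of_forall hpw), integral_const_mul]
  -- integration by parts
  have hdiffp : Differentiable ℝ p := hp.differentiable one_ne_zero
  have hdiffκ : Differentiable ℝ (fun y' => gaussKernel d α σ x y') := fun y =>
    (gaussKernel_hasFDerivAt_snd d α σ x y).differentiableAt
  have hgradp : ∀ y, fderiv ℝ p y v = ⟪gradient p y, v⟫ := by
    intro y
    rw [gradient, InnerProductSpace.toDual_symm_apply]
  have hibp : ∫ y, p y * fderiv ℝ (fun y' => gaussKernel d α σ x y') y v
      = - ∫ y, fderiv ℝ p y v * gaussKernel d α σ x y := by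
    apply integral_mul_fderiv_eq_neg_fderiv_mul_of_integrable
    · -- Integrable fun y => fderiv ℝ p y v * κ x y
      refine Integrable.mono' (hI2.const_mul ‖v‖) ?_ ?_
      · apply Continuous.aestronglyMeasurable
        have : Continuous (fun y => fderiv ℝ p y v) :=
          (ContinuousLinearMap.apply ℝ ℝ v).continuous.comp (hp.continuous_fderiv one_ne_zero)
        fun_prop
      · refine Eventually.of_forall fun y => ?_
        rw [Real.norm_eq_abs, abs_mul, abs_of_pos (hκpos x y), hgradp]
        have h1 : |⟪gradient p y, v⟫| ≤ ‖gradient p y‖ * ‖v‖ := abs_real_inner_le_norm _ _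
        calc |⟪gradient p y, v⟫| * gaussKernel d α σ x y
            ≤ ‖gradient p y‖ * ‖v‖ * gaussKernel d α σ x y :=
              mul_le_mul_of_nonneg_right h1 (hκpos x y).le
          _ = ‖v‖ * (‖gradient p y‖ * gaussKernel d α σ x y) := by ring
    · -- Integrable fun y => p y * fderiv ℝ (κ x ·) y v
      have key : ∀ y : EuclideanSpace ℝ (Fin d), p y * fderiv ℝ (fun y' => gaussKernel d α σ x y') y v
          = (-α) * (F' x y v) := by
        intro y
        rw [(gaussKernel_hasFDerivAt_snd d α σ x y).fderiv]
        simp only [hF', ContinuousLinearMap.smul_apply, innerSL_apply_apply, smul_eq_mul]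
        ring
      have : Integrable (fun y => (-α) * (F' x y v)) := by
        apply Integrable.const_mul
        refine Integrable.mono' (hbi.const_mul ‖v‖) ?_ ?_
        · exact (((ContinuousLinearMap.apply ℝ ℝ v).continuous.comp
            hF'cont)).aestronglyMeasurable
        · refine Eventually.of_forall fun y => ?_
          calc ‖F' x y v‖ ≤ ‖F' x y‖ * ‖v‖ := (F' x y).le_opNorm v
            _ ≤ bound y * ‖v‖ := by
                apply mul_le_mul_of_nonneg_right
                  (hF'bound y x (Metric.mem_ball_self hε)) (norm_nonneg v)
            _ = ‖v‖ * bound y := by ring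
      exact this.congr (Eventually.of_forall fun y => (key y).symm)
    · exact hI1
    · exact fun z _ => hdiffp z
    · exact fun z _ => hdiffκ z
  rw [hibp]
  have hrhs : ∫ y, fderiv ℝ p y v * gaussKernel d α σ x y
      = ⟪∫ y, gaussKernel d α σ x y • gradient p y, v⟫ := by
    rw [real_inner_comm, ← integral_inner hIsm v]
    apply integral_congr_ae
    refine Eventually.of_forall fun y => ?_
    beta_reduce
    rw [hgradp, real_inner_smul_right, real_inner_comm]
    ring
  rw [hrhs, real_inner_smul_left]
  ring
end

section
/- Let p : ℝ^d → ℝ be a probability density, α > 0, σ > 0, and x ∈ ℝ^d with p_{α,σ}(x) > 0. Assume that y ↦ (1 + ‖y‖)·p(y)·φ_{α,σ}(x', y) is integrable for all x' in a neighborhood of x and that differentiation under the integral sign in x is justified by an integrable dominating function. Then ∇_x log p_{α,σ}(x) = ∫_{ℝ^d} ((α·y − x)/σ²) · p(y | x) dy; that is, the score of the noised marginal equals the posterior expectation of the conditional (denoising) score (α·y − x)/σ². -/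
open MeasureTheory Filter

open InnerProductSpace

variable {d : ℕ}


lemma gk_pos (α σ : ℝ) (x y : EuclideanSpace ℝ (Fin d)) : 0 < gaussKernel d α σ x y :=
  Real.exp_pos _

lemma hasFDerivAt_pK (α σ : ℝ) (hσ : 0 < σ) (c : ℝ) (y x₀ : EuclideanSpace ℝ (Fin d)) :
    HasFDerivAt (fun x' => c * gaussKernel d α σ x' y)
      (toDual ℝ (EuclideanSpace ℝ (Fin d))
        ((c * gaussKernel d α σ x₀ y) • ((σ ^ 2)⁻¹ • (α • y - x₀)))) x₀ := by
  have h1 : HasFDerivAt (fun x' : EuclideanSpace ℝ (Fin d) => ‖x' - α • y‖ ^ 2)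
      (2 • (innerSL ℝ (x₀ - α • y))) x₀ := by
    simpa using ((hasFDerivAt_id x₀).sub_const (α • y)).norm_sq
  have h2 : HasFDerivAt (fun x' : EuclideanSpace ℝ (Fin d) =>
      -‖x' - α • y‖ ^ 2 / (2 * σ ^ 2))
      ((-(2 * σ ^ 2)⁻¹ : ℝ) • (2 • (innerSL ℝ (x₀ - α • y)))) x₀ := by
    have := h1.const_smul (-(2 * σ ^ 2)⁻¹ : ℝ)
    refine this.congr_of_eventuallyEq (Eventually.of_forall fun x' => ?_)
    simp only [Pi.smul_apply, smul_eq_mul]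
    ring
  have h3 := h2.exp
  have h4 := h3.const_mul c
  refine h4.congr_fderiv ?_
  ext w
  have hσ2 : (σ ^ 2) ≠ 0 := by positivity
  simp only [gaussKernel, InnerProductSpace.toDual_apply_apply, ContinuousLinearMap.smul_apply,
    ContinuousLinearMap.coe_smul', Pi.smul_apply, innerSL_apply_apply, real_inner_smul_left,
    smul_eq_mul, inner_sub_left, inner_smul_left, real_inner_smul_left, conj_trivial,
    nsmul_eq_mul, Nat.cast_ofNat]
  field_simp
  ring


/-- **Score of the noised marginal as a posterior denoising average.**
Let `p : ℝ^d → ℝ` be a probability density, `α > 0`, `σ > 0`, `x ∈ ℝ^d` with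
`p_{α,σ}(x) > 0`.  Assume `y ↦ (1 + ‖y‖) p(y) φ_{α,σ}(x', y)` is integrable for all
`x'` near `x` and that differentiation under the integral sign in `x` is justified
by an integrable dominating function.  Then
`∇_x log p_{α,σ}(x) = ∫ ((α·y − x)/σ²) p(y | x) dy`. -/
theorem score_eq_posterior_denoising_average (d : ℕ)
    (p : EuclideanSpace ℝ (Fin d) → ℝ)
    (hp0 : ∀ y, 0 ≤ p y) (hpI : Integrable p) (hpP : ∫ y, p y = 1)
    (α σ : ℝ) (hα : 0 < α) (hσ : 0 < σ)
    (x : EuclideanSpace ℝ (Fin d))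
    (hpos : 0 < ∫ y, p y * gaussKernel d α σ x y)
    (hInt : ∀ᶠ x' in nhds x,
      Integrable (fun y => (1 + ‖y‖) * (p y * gaussKernel d α σ x' y)))
    (hDom : ∃ (ε : ℝ) (bound : EuclideanSpace ℝ (Fin d) → ℝ), 0 < ε ∧
      Integrable bound ∧
      ∀ y, ∀ x' ∈ Metric.ball x ε,
        ‖gradient (fun x'' => p y * gaussKernel d α σ x'' y) x'‖ ≤ bound y) :
    gradient (fun x' => Real.log (∫ y, p y * gaussKernel d α σ x' y)) x
      = ∫ y,
          ((p y * gaussKernel d α σ x y) / ∫ z, p z * gaussKernel d α σ x z) •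
            ((σ ^ 2)⁻¹ • (α • y - x)) := by
  classical
  set G : EuclideanSpace ℝ (Fin d) → EuclideanSpace ℝ (Fin d) → EuclideanSpace ℝ (Fin d) :=
    fun x' y => (p y * gaussKernel d α σ x' y) • ((σ ^ 2)⁻¹ • (α • y - x')) with hG
  set F' : EuclideanSpace ℝ (Fin d) → EuclideanSpace ℝ (Fin d) →
      (EuclideanSpace ℝ (Fin d) →L[ℝ] ℝ) :=
    fun x' y => toDual ℝ (EuclideanSpace ℝ (Fin d)) (G x' y) with hF'
  have hderiv : ∀ (y x' : EuclideanSpace ℝ (Fin d)),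
      HasFDerivAt (fun x'' => p y * gaussKernel d α σ x'' y) (F' x' y) x' :=
    fun y x' => hasFDerivAt_pK α σ hσ (p y) y x'
  have hgrad_eq : ∀ (y x' : EuclideanSpace ℝ (Fin d)),
      gradient (fun x'' => p y * gaussKernel d α σ x'' y) x' = G x' y := by
    intro y x'
    have := ((hderiv y x').hasGradientAt).gradient
    simpa [hF'] using this
  have hnormF' : ∀ (y x' : EuclideanSpace ℝ (Fin d)), ‖F' x' y‖ = ‖G x' y‖ := fun y x' =>
    LinearIsometryEquiv.norm_map (toDual ℝ (EuclideanSpace ℝ (Fin d))) _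
  obtain ⟨ε, bound, hε, hbI, hb⟩ := hDom
  have hb' : ∀ y : EuclideanSpace ℝ (Fin d), ∀ x' ∈ Metric.ball x ε,
      ‖F' x' y‖ ≤ bound y := by
    intro y x' hx'
    rw [hnormF', ← hgrad_eq]
    exact hb y x' hx'
  have hKcont : ∀ x' : EuclideanSpace ℝ (Fin d),
      Continuous fun y : EuclideanSpace ℝ (Fin d) => gaussKernel d α σ x' y := by
    intro x'
    unfold gaussKernel
    fun_prop
  have hpKm : ∀ x' : EuclideanSpace ℝ (Fin d),
      AEStronglyMeasurable (fun y => p y * gaussKernel d α σ x' y)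
      (volume : Measure (EuclideanSpace ℝ (Fin d))) :=
    fun x' => hpI.aestronglyMeasurable.mul (hKcont x').aestronglyMeasurable
  have hGm : AEStronglyMeasurable (G x) (volume : Measure (EuclideanSpace ℝ (Fin d))) := by
    apply AEStronglyMeasurable.smul (hpKm x)
    exact (Continuous.aestronglyMeasurable (by fun_prop))
  have hF'm : AEStronglyMeasurable (F' x) (volume : Measure (EuclideanSpace ℝ (Fin d))) :=
    (toDual ℝ (EuclideanSpace ℝ (Fin d))).continuous.comp_aestronglyMeasurable hGm
  have hIx : Integrable (fun y => (1 + ‖y‖) * (p y * gaussKernel d α σ x y)) :=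
    hInt.self_of_nhds
  have hpK_int : Integrable (fun y => p y * gaussKernel d α σ x y) := by
    refine hIx.mono' (hpKm x) ?_
    filter_upwards with y
    have h1 : 0 ≤ p y * gaussKernel d α σ x y :=
      mul_nonneg (hp0 y) (gk_pos α σ x y).le
    rw [Real.norm_of_nonneg h1]
    nlinarith [norm_nonneg y]
  have hF'_int : Integrable (F' x) := by
    refine hbI.mono' hF'm ?_
    filter_upwards with y
    exact hb' y x (Metric.mem_ball_self hε)
  have hG_int : Integrable (G x) := by
    refine hbI.mono' hGm ?_
    filter_upwards with y
    rw [← hnormF' y x]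
    exact hb' y x (Metric.mem_ball_self hε)
  have hmain : HasFDerivAt (fun x' => ∫ y, p y * gaussKernel d α σ x' y)
      (∫ y, F' x y) x := by
    apply hasFDerivAt_integral_of_dominated_of_fderiv_le (Metric.ball_mem_nhds x hε)
      (Eventually.of_forall fun x' => hpKm x') hpK_int hF'm
      (Eventually.of_forall fun y => hb' y) hbI
      (Eventually.of_forall fun y x' hx' => hderiv y x')
  have hid : (∫ y, F' x y) = toDual ℝ (EuclideanSpace ℝ (Fin d)) (∫ y, G x y) := by
    ext w
    rw [ContinuousLinearMap.integral_apply hF'_int w]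
    simp only [hF', InnerProductSpace.toDual_apply_apply]
    rw [real_inner_comm, ← integral_inner hG_int w]
    exact integral_congr_ae (Filter.Eventually.of_forall fun y => real_inner_comm _ _)
  rw [hid] at hmain
  have hlog : HasFDerivAt (fun x' => Real.log (∫ y, p y * gaussKernel d α σ x' y))
      ((∫ y, p y * gaussKernel d α σ x y)⁻¹ •
        (toDual ℝ (EuclideanSpace ℝ (Fin d)) (∫ y, G x y))) x :=
    by have := (Real.hasDerivAt_log (ne_of_gt hpos)).comp_hasFDerivAt x hmain; exact this
  have hsm : (∫ y, p y * gaussKernel d α σ x y)⁻¹ •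
        (toDual ℝ (EuclideanSpace ℝ (Fin d)) (∫ y, G x y))
      = toDual ℝ (EuclideanSpace ℝ (Fin d))
        ((∫ y, p y * gaussKernel d α σ x y)⁻¹ • ∫ y, G x y) := by
    ext w; simp [real_inner_smul_left]
  rw [hsm] at hlog
  rw [hlog.hasGradientAt.gradient]
  have hrw : ∀ y : EuclideanSpace ℝ (Fin d),
      ((p y * gaussKernel d α σ x y) / ∫ z, p z * gaussKernel d α σ x z) •
        ((σ ^ 2)⁻¹ • (α • y - x))
      = (∫ z, p z * gaussKernel d α σ x z)⁻¹ • G x y := by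
    intro y
    rw [hG, div_eq_inv_mul, mul_smul]
  simp_rw [hrw]
  rw [integral_smul]
  simp
end

section
/- Let p : ℝ^d → ℝ be a continuously differentiable probability density, α > 0, σ > 0, and x ∈ ℝ^d. Assume that y ↦ (1 + ‖y‖)·p(y)·φ_{α,σ}(x', y) and y ↦ ‖∇p(y)‖·φ_{α,σ}(x', y) are integrable for all x' in a neighborhood of x, that p(y)·φ_{α,σ}(x, y) → 0 as ‖y‖ → ∞, and that differentiation under the integral sign in x is justified by an integrable dominating function. Then ∫_{ℝ^d} (∇p)(y)·φ_{α,σ}(x, y) dy = (α/σ²) · ∫_{ℝ^d} (α·y − x)·p(y)·φ_{α,σ}(x, y) dy; that is, the posterior average of the exact score ∇ log p (scaled by 1/α) coincides with the posterior average of the denoising target (α·y − x)/σ². -/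
open MeasureTheory Filter

set_option maxHeartbeats 1000000

open scoped RealInnerProductSpace in
lemma gaussKernel_hasFDerivAt (d : ℕ) (α σ : ℝ)
    (x y : EuclideanSpace ℝ (Fin d)) :
    HasFDerivAt (gaussKernel d α σ x)
      (((α / σ ^ 2) * gaussKernel d α σ x y) • (innerSL ℝ (x - α • y))) y := by
  have hA : HasFDerivAt (fun y : EuclideanSpace ℝ (Fin d) => x - α • y)
      (-(α • ContinuousLinearMap.id ℝ (EuclideanSpace ℝ (Fin d)))) y :=
    ((hasFDerivAt_id y).const_smul α).const_sub x
  have hq := hA.inner ℝ hA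
  have hq2 := hq.const_mul (-(1 / (2 * σ ^ 2)))
  have hexp := hq2.exp
  have hfun : (fun y : EuclideanSpace ℝ (Fin d) =>
      Real.exp (-(1 / (2 * σ ^ 2)) * ⟪x - α • y, x - α • y⟫)) = gaussKernel d α σ x := by
    funext z
    rw [gaussKernel, real_inner_self_eq_norm_sq]
    ring_nf
  rw [hfun] at hexp
  refine hexp.congr_fderiv ?_
  ext v
  simp only [ContinuousLinearMap.smul_apply, ContinuousLinearMap.comp_apply,
    ContinuousLinearMap.prod_apply, ContinuousLinearMap.neg_apply,
    ContinuousLinearMap.id_apply, fderivInnerCLM_apply, innerSL_apply_apply, smul_eq_mul,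
    inner_neg_right, real_inner_smul_right, inner_neg_left, real_inner_smul_left,
    real_inner_self_eq_norm_sq, gaussKernel]
  rw [real_inner_comm v (x - α • y),
    show -(1 / (2 * σ ^ 2)) * ‖x - α • y‖ ^ 2 = -‖x - α • y‖ ^ 2 / (2 * σ ^ 2) by ring]
  ring

open scoped RealInnerProductSpace

/-- **Equivalence of PSM and DSM regression targets as unnormalized posterior averages.**
Let `p : ℝ^d → ℝ` be a `C¹` probability density, `α > 0`, `σ > 0`, `x ∈ ℝ^d`.
Assume `y ↦ (1 + ‖y‖) p(y) φ_{α,σ}(x', y)` and `y ↦ ‖∇p(y)‖ φ_{α,σ}(x', y)` are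
integrable for all `x'` near `x`, that `p(y) φ_{α,σ}(x, y) → 0` as `‖y‖ → ∞`, and
that differentiation under the integral sign in `x` is justified by an integrable
dominating function.  Then
`∫ (∇p)(y) φ_{α,σ}(x, y) dy = (α/σ²) ∫ (α·y − x) p(y) φ_{α,σ}(x, y) dy`. -/
theorem psm_target_eq_dsm_target (d : ℕ)
    (p : EuclideanSpace ℝ (Fin d) → ℝ) (hp : ContDiff ℝ 1 p)
    (hp0 : ∀ y, 0 ≤ p y) (hpI : Integrable p) (hpP : ∫ y, p y = 1)
    (α σ : ℝ) (hα : 0 < α) (hσ : 0 < σ)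
    (x : EuclideanSpace ℝ (Fin d))
    (hInt1 : ∀ᶠ x' in nhds x,
      Integrable (fun y => (1 + ‖y‖) * (p y * gaussKernel d α σ x' y)))
    (hInt2 : ∀ᶠ x' in nhds x,
      Integrable (fun y => ‖gradient p y‖ * gaussKernel d α σ x' y))
    (hTail : Tendsto (fun y => p y * gaussKernel d α σ x y) (cocompact _) (nhds 0))
    (hDom : ∃ (ε : ℝ) (bound : EuclideanSpace ℝ (Fin d) → ℝ), 0 < ε ∧
      Integrable bound ∧
      ∀ y, ∀ x' ∈ Metric.ball x ε,
        ‖gradient (fun x'' => p y * gaussKernel d α σ x'' y) x'‖ ≤ bound y) :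
    (∫ y, gaussKernel d α σ x y • gradient p y)
      = (α / σ ^ 2) • ∫ y, (p y * gaussKernel d α σ x y) • (α • y - x) := by
  have hσ2 : (0:ℝ) < σ ^ 2 := by positivity
  have hφpos : ∀ y, 0 < gaussKernel d α σ x y := fun y => Real.exp_pos _
  have h1 : Integrable (fun y => (1 + ‖y‖) * (p y * gaussKernel d α σ x y)) :=
    hInt1.self_of_nhds
  have h2 : Integrable (fun y => ‖gradient p y‖ * gaussKernel d α σ x y) :=
    hInt2.self_of_nhds
  have hder := fun y => gaussKernel_hasFDerivAt d α σ x y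
  have hφdiff : Differentiable ℝ (gaussKernel d α σ x) := fun y => (hder y).differentiableAt
  have hφcont : Continuous (gaussKernel d α σ x) := hφdiff.continuous
  have hpc : Continuous p := hp.continuous
  have hfc : Continuous (fun y => fderiv ℝ p y) := hp.continuous_fderiv one_ne_zero
  have hgradc : Continuous (fun y => gradient p y) :=
    (InnerProductSpace.toDual ℝ (EuclideanSpace ℝ (Fin d))).symm.continuous.comp hfc
  have hgradnorm : ∀ y, ‖gradient p y‖ = ‖fderiv ℝ p y‖ := fun y =>
    LinearIsometryEquiv.norm_map _ _
  have hpφ : ∀ y, 0 ≤ p y * gaussKernel d α σ x y := fun y =>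
    mul_nonneg (hp0 y) (hφpos y).le
  have hIL : Integrable (fun y => gaussKernel d α σ x y • gradient p y) := by
    refine h2.mono' ((hφcont.smul hgradc).aestronglyMeasurable) ?_
    filter_upwards with y
    rw [norm_smul, Real.norm_eq_abs, abs_of_pos (hφpos y), mul_comm]
  have hIR : Integrable (fun y => (p y * gaussKernel d α σ x y) • (α • y - x)) := by
    refine (h1.const_mul (α + ‖x‖)).mono'
      (((hpc.mul hφcont).smul ((continuous_id.const_smul α).sub continuous_const)).aestronglyMeasurable) ?_
    filter_upwards with y
    rw [norm_smul, Real.norm_eq_abs, abs_of_nonneg (hpφ y)]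
    have hb : ‖α • y - x‖ ≤ (α + ‖x‖) * (1 + ‖y‖) := by
      calc ‖α • y - x‖ ≤ ‖α • y‖ + ‖x‖ := norm_sub_le _ _
        _ = α * ‖y‖ + ‖x‖ := by rw [norm_smul, Real.norm_eq_abs, abs_of_pos hα]
        _ ≤ (α + ‖x‖) * (1 + ‖y‖) := by nlinarith [norm_nonneg y, norm_nonneg x]
    calc p y * gaussKernel d α σ x y * ‖α • y - x‖
        ≤ p y * gaussKernel d α σ x y * ((α + ‖x‖) * (1 + ‖y‖)) :=
          mul_le_mul_of_nonneg_left hb (hpφ y)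
      _ = (α + ‖x‖) * ((1 + ‖y‖) * (p y * gaussKernel d α σ x y)) := by ring
  apply ext_inner_right ℝ
  intro v
  have hfg : Integrable (fun y => p y * gaussKernel d α σ x y) := by
    refine h1.mono' ((hpc.mul hφcont).aestronglyMeasurable) ?_
    filter_upwards with y
    rw [Real.norm_eq_abs, abs_of_nonneg (hpφ y)]
    nlinarith [hpφ y, norm_nonneg y]
  have hf'g : Integrable (fun y => fderiv ℝ p y v * gaussKernel d α σ x y) := by
    refine (h2.const_mul ‖v‖).mono'
      ((((ContinuousLinearMap.apply ℝ ℝ v).continuous.comp hfc).mul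
        hφcont).aestronglyMeasurable) ?_
    filter_upwards with y
    rw [Real.norm_eq_abs, abs_mul, abs_of_pos (hφpos y)]
    have hb : |fderiv ℝ p y v| ≤ ‖gradient p y‖ * ‖v‖ := by
      rw [hgradnorm y, ← Real.norm_eq_abs]
      exact (fderiv ℝ p y).le_opNorm v
    calc |fderiv ℝ p y v| * gaussKernel d α σ x y
        ≤ ‖gradient p y‖ * ‖v‖ * gaussKernel d α σ x y :=
          mul_le_mul_of_nonneg_right hb (hφpos y).le
      _ = ‖v‖ * (‖gradient p y‖ * gaussKernel d α σ x y) := by ring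
  have hφfderiv : ∀ y, fderiv ℝ (gaussKernel d α σ x) y v
      = (α / σ ^ 2) * gaussKernel d α σ x y * ⟪x - α • y, v⟫ := by
    intro y
    rw [(hder y).fderiv]
    simp only [ContinuousLinearMap.smul_apply, innerSL_apply_apply, smul_eq_mul]
  have hfg' : Integrable (fun y => p y * fderiv ℝ (gaussKernel d α σ x) y v) := by
    simp only [hφfderiv]
    refine (h1.const_mul ((α / σ ^ 2) * (‖x‖ + α) * ‖v‖)).mono'
      ((hpc.mul ((continuous_const.mul hφcont).mul
        (Continuous.inner (continuous_const.sub (continuous_id.const_smul α)) continuous_const))).aestronglyMeasurable) ?_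
    filter_upwards with y
    have hb1 : |⟪x - α • y, v⟫| ≤ (‖x‖ + α * ‖y‖) * ‖v‖ := by
      refine le_trans (abs_real_inner_le_norm _ _) ?_
      have : ‖x - α • y‖ ≤ ‖x‖ + α * ‖y‖ := by
        calc ‖x - α • y‖ ≤ ‖x‖ + ‖α • y‖ := norm_sub_le _ _
          _ = ‖x‖ + α * ‖y‖ := by rw [norm_smul, Real.norm_eq_abs, abs_of_pos hα]
      exact mul_le_mul_of_nonneg_right this (norm_nonneg v)
    rw [Real.norm_eq_abs, abs_mul, abs_mul, abs_mul,
      abs_of_nonneg (hp0 y), abs_of_pos (hφpos y),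
      abs_of_nonneg (div_nonneg hα.le hσ2.le)]
    have hKpos : (0:ℝ) ≤ α / σ ^ 2 := div_nonneg hα.le hσ2.le
    have hb2 : ‖x‖ + α * ‖y‖ ≤ (‖x‖ + α) * (1 + ‖y‖) := by
      nlinarith [norm_nonneg y, norm_nonneg x]
    calc p y * (α / σ ^ 2 * gaussKernel d α σ x y * |⟪x - α • y, v⟫|)
        = (α / σ ^ 2) * (p y * gaussKernel d α σ x y) * |⟪x - α • y, v⟫| := by ring
      _ ≤ (α / σ ^ 2) * (p y * gaussKernel d α σ x y) * ((‖x‖ + α * ‖y‖) * ‖v‖) :=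
          mul_le_mul_of_nonneg_left hb1 (mul_nonneg hKpos (hpφ y))
      _ ≤ (α / σ ^ 2) * (p y * gaussKernel d α σ x y) * ((‖x‖ + α) * (1 + ‖y‖) * ‖v‖) := by
          refine mul_le_mul_of_nonneg_left ?_ (mul_nonneg hKpos (hpφ y))
          exact mul_le_mul_of_nonneg_right hb2 (norm_nonneg v)
      _ = α / σ ^ 2 * (‖x‖ + α) * ‖v‖ * ((1 + ‖y‖) * (p y * gaussKernel d α σ x y)) := by
          ring
  have hibp := integral_mul_fderiv_eq_neg_fderiv_mul_of_integrable hf'g hfg' hfg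
    (fun z _ => hp.differentiable one_ne_zero z) (fun z _ => hφdiff z)
  have key : ∫ y, gaussKernel d α σ x y * fderiv ℝ p y v
      = (α / σ ^ 2) * ∫ y, (p y * gaussKernel d α σ x y) * ⟪v, α • y - x⟫ := by
    have e1 : (fun y => p y * fderiv ℝ (gaussKernel d α σ x) y v)
        = fun y => -((α / σ ^ 2) * ((p y * gaussKernel d α σ x y) * ⟪v, α • y - x⟫)) := by
      funext y
      rw [hφfderiv y, show x - α • y = -(α • y - x) by abel, inner_neg_left,
        real_inner_comm (α • y - x) v]
      ring
    calc ∫ y, gaussKernel d α σ x y * fderiv ℝ p y v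
        = ∫ y, fderiv ℝ p y v * gaussKernel d α σ x y := by
          congr 1; funext y; ring
      _ = - ∫ y, p y * fderiv ℝ (gaussKernel d α σ x) y v := by rw [hibp, neg_neg]
      _ = - ∫ y, -((α / σ ^ 2) * ((p y * gaussKernel d α σ x y) * ⟪v, α • y - x⟫)) := by
          rw [e1]
      _ = (α / σ ^ 2) * ∫ y, (p y * gaussKernel d α σ x y) * ⟪v, α • y - x⟫ := by
          have hs := integral_smul (μ := volume) (α / σ ^ 2)
            (fun y => p y * gaussKernel d α σ x y * ⟪v, α • y - x⟫)
          simp only [smul_eq_mul] at hs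
          rw [integral_neg, neg_neg, hs]
  calc ⟪∫ y, gaussKernel d α σ x y • gradient p y, v⟫
      = ⟪v, ∫ y, gaussKernel d α σ x y • gradient p y⟫ := real_inner_comm _ _
    _ = ∫ y, ⟪v, gaussKernel d α σ x y • gradient p y⟫ := (integral_inner hIL v).symm
    _ = ∫ y, gaussKernel d α σ x y * fderiv ℝ p y v := by
        congr 1; funext y
        rw [real_inner_smul_right, real_inner_comm]
        congr 1
        exact InnerProductSpace.toDual_symm_apply
    _ = (α / σ ^ 2) * ∫ y, (p y * gaussKernel d α σ x y) * ⟪v, α • y - x⟫ := key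
    _ = (α / σ ^ 2) * ∫ y, ⟪v, (p y * gaussKernel d α σ x y) • (α • y - x)⟫ := by
        simp_rw [real_inner_smul_right]
    _ = ⟪v, (α / σ ^ 2) • ∫ y, (p y * gaussKernel d α σ x y) • (α • y - x)⟫ := by
        rw [integral_inner hIR v, real_inner_smul_right]
    _ = ⟪(α / σ ^ 2) • ∫ y, (p y * gaussKernel d α σ x y) • (α • y - x), v⟫ :=
        real_inner_comm _ _
end

section
/- Fix μ, y ∈ ℝ, v > 0, s > 0, and α ≠ 0. Let π_y denote the probability measure on ℝ with density proportional to x ↦ exp(−(x − μ)²/(2v)) · exp(−(y − α·x)²/(2s²)). Then the variance under π_y of the DSM target x ↦ (α·x − y)/s² equals α²·v/(s²·(α²v + s²)), the variance under π_y of the PSM target x ↦ −(x − μ)/v equals s²/(v·(α²v + s²)), and the PSM target variance is strictly smaller than the DSM target variance if and only if s² < |α|·v. -/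
open MeasureTheory

open Real



lemma bound_mul_exp {c : ℝ} (hc : 0 < c) (x : ℝ) :
    ‖x * Real.exp (-c * x ^ 2)‖ ≤ 1 / Real.sqrt c := by
  have hsc : 0 < Real.sqrt c := Real.sqrt_pos.2 hc
  have hsq : Real.sqrt c ^ 2 = c := Real.sq_sqrt hc.le
  have h1 : 1 + c * x ^ 2 ≤ Real.exp (c * x ^ 2) := by
    have := Real.add_one_le_exp (c * x ^ 2); linarith
  have hexp : Real.exp (-c * x ^ 2) = (Real.exp (c * x ^ 2))⁻¹ := by
    rw [← Real.exp_neg]; ring_nf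
  have hep : 0 < Real.exp (c * x ^ 2) := Real.exp_pos _
  have key : |x| * Real.sqrt c ≤ Real.exp (c * x ^ 2) := by
    nlinarith [sq_nonneg (Real.sqrt c * |x| - 1), sq_abs x, abs_nonneg x]
  have hprod : Real.exp (c * x ^ 2) * Real.exp (-c * x ^ 2) = 1 := by
    rw [← Real.exp_add, show c * x ^ 2 + -c * x ^ 2 = 0 by ring, Real.exp_zero]
  have hle : |x| ≤ Real.exp (c * x ^ 2) / Real.sqrt c := by
    rw [le_div_iff₀ hsc]; exact key
  rw [norm_mul, Real.norm_eq_abs, Real.norm_eq_abs, abs_of_pos (Real.exp_pos _)]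
  calc |x| * Real.exp (-c * x ^ 2)
      ≤ (Real.exp (c * x ^ 2) / Real.sqrt c) * Real.exp (-c * x ^ 2) :=
        mul_le_mul_of_nonneg_right hle (Real.exp_pos _).le
    _ = 1 / Real.sqrt c := by rw [div_mul_eq_mul_div, hprod]

lemma integrable_sq_mul_exp {b : ℝ} (hb : 0 < b) :
    Integrable (fun x : ℝ => x ^ 2 * Real.exp (-b * x ^ 2)) := by
  have hb2 : 0 < b / 2 := by linarith
  have key : ∀ x : ℝ, x ^ 2 * Real.exp (-b * x ^ 2)
      = (x * Real.exp (-(b/2) * x ^ 2)) * (x * Real.exp (-(b/2) * x ^ 2)) := by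
    intro x
    rw [mul_mul_mul_comm, ← Real.exp_add]
    ring_nf
  simp_rw [key]
  refine (integrable_mul_exp_neg_mul_sq hb2).bdd_mul (c := 1 / Real.sqrt (b/2)) ?_ (Filter.Eventually.of_forall fun x => bound_mul_exp hb2 x)
  exact (continuous_id.mul ((continuous_const.mul (continuous_pow 2)).rexp)).aestronglyMeasurable

lemma integral_mul_exp_zero {b : ℝ} (hb : 0 < b) :
    ∫ x : ℝ, x * Real.exp (-b * x ^ 2) = 0 := by
  have hd : ∀ x : ℝ, HasDerivAt (fun x : ℝ => -(1/(2*b)) * Real.exp (-b * x ^ 2))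
      (x * Real.exp (-b * x ^ 2)) x := by
    intro x
    have h1 : HasDerivAt (fun x : ℝ => -b * x ^ 2) (-b * (2 * x)) x := by
      simpa using ((hasDerivAt_pow 2 x).const_mul (-b))
    have := (h1.exp).const_mul (-(1/(2*b)))
    refine this.congr_deriv ?_
    field_simp
  exact integral_eq_zero_of_hasDerivAt_of_integrable hd (integrable_mul_exp_neg_mul_sq hb)
    ((integrable_exp_neg_mul_sq hb).const_mul _)

lemma integral_sq_mul_exp {b : ℝ} (hb : 0 < b) :
    ∫ x : ℝ, x ^ 2 * Real.exp (-b * x ^ 2) = Real.sqrt (π / b) / (2 * b) := by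
  have hd : ∀ x : ℝ, HasDerivAt (fun x : ℝ => x * Real.exp (-b * x ^ 2))
      (Real.exp (-b * x ^ 2) - 2 * b * (x ^ 2 * Real.exp (-b * x ^ 2))) x := by
    intro x
    have h1 : HasDerivAt (fun x : ℝ => -b * x ^ 2) (-b * (2 * x)) x := by
      simpa using ((hasDerivAt_pow 2 x).const_mul (-b))
    have := (hasDerivAt_id x).mul h1.exp
    refine this.congr_deriv ?_
    simp only [id_eq]
    ring
  have hzero := integral_eq_zero_of_hasDerivAt_of_integrable hd
    ((integrable_exp_neg_mul_sq hb).sub ((integrable_sq_mul_exp hb).const_mul (2*b)))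
    (integrable_mul_exp_neg_mul_sq hb)
  rw [integral_sub (integrable_exp_neg_mul_sq hb) ((integrable_sq_mul_exp hb).const_mul (2*b)),
    integral_const_mul, integral_gaussian] at hzero
  have hb' : (2:ℝ) * b ≠ 0 := by positivity
  field_simp at hzero ⊢
  linarith



lemma gauss_int0 {k : ℝ} (hk : 0 < k) (m : ℝ) :
    (∫ x : ℝ, Real.exp (-k * (x - m) ^ 2)) = Real.sqrt (π / k) := by
  have h : (∫ x : ℝ, Real.exp (-k * (x - m) ^ 2)) = ∫ u : ℝ, Real.exp (-k * u ^ 2) :=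
    integral_sub_right_eq_self (μ := volume) (fun u : ℝ => Real.exp (-k * u ^ 2)) m
  rw [h, integral_gaussian]

lemma gauss_int1 {k : ℝ} (hk : 0 < k) (m : ℝ) :
    (∫ x : ℝ, x * Real.exp (-k * (x - m) ^ 2)) = m * Real.sqrt (π / k) := by
  have h : (∫ x : ℝ, (x - m + m) * Real.exp (-k * (x - m) ^ 2))
      = ∫ u : ℝ, (u + m) * Real.exp (-k * u ^ 2) :=
    integral_sub_right_eq_self (μ := volume) (fun u : ℝ => (u + m) * Real.exp (-k * u ^ 2)) m
  simp only [sub_add_cancel] at h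
  rw [h]
  have : ∀ u : ℝ, (u + m) * Real.exp (-k * u ^ 2)
      = u * Real.exp (-k * u ^ 2) + m * Real.exp (-k * u ^ 2) := fun u => by ring
  simp_rw [this]
  rw [integral_add (integrable_mul_exp_neg_mul_sq hk)
      ((integrable_exp_neg_mul_sq hk).const_mul m),
    integral_const_mul, integral_mul_exp_zero hk, integral_gaussian]
  ring

lemma gauss_int2 {k : ℝ} (hk : 0 < k) (m : ℝ) :
    (∫ x : ℝ, (x - m) ^ 2 * Real.exp (-k * (x - m) ^ 2)) = Real.sqrt (π / k) / (2 * k) := by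
  have h : (∫ x : ℝ, (x - m) ^ 2 * Real.exp (-k * (x - m) ^ 2))
      = ∫ u : ℝ, u ^ 2 * Real.exp (-k * u ^ 2) :=
    integral_sub_right_eq_self (μ := volume) (fun u : ℝ => u ^ 2 * Real.exp (-k * u ^ 2)) m
  rw [h, integral_sq_mul_exp hk]

lemma gauss_integrable0 {k : ℝ} (hk : 0 < k) (m : ℝ) :
    Integrable (fun x : ℝ => Real.exp (-k * (x - m) ^ 2)) :=
  (integrable_exp_neg_mul_sq hk).comp_sub_right m

lemma gauss_integrable1 {k : ℝ} (hk : 0 < k) (m : ℝ) :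
    Integrable (fun x : ℝ => x * Real.exp (-k * (x - m) ^ 2)) := by
  have h := (((integrable_mul_exp_neg_mul_sq hk).add
      ((integrable_exp_neg_mul_sq hk).const_mul m)).comp_sub_right m)
  refine h.congr (Filter.Eventually.of_forall fun x => ?_)
  simp only [Pi.add_apply]
  ring

lemma gauss_integrable2 {k : ℝ} (hk : 0 < k) (m : ℝ) :
    Integrable (fun x : ℝ => (x - m) ^ 2 * Real.exp (-k * (x - m) ^ 2)) :=
  (integrable_sq_mul_exp hk).comp_sub_right m

/-- **Posterior variances of the DSM and PSM targets in the 1D Gaussian model.**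
Fix `μ, y ∈ ℝ`, `v > 0`, `s > 0`, `α ≠ 0`, and let `π_y` be the probability measure
with density proportional to `x ↦ exp(−(x − μ)²/(2v)) · exp(−(y − αx)²/(2s²))`.
Then the variance under `π_y` of the DSM target `x ↦ (αx − y)/s²` equals
`α²v/(s²(α²v + s²))`, the variance under `π_y` of the PSM target `x ↦ −(x − μ)/v`
equals `s²/(v(α²v + s²))`, and the PSM target variance is strictly smaller than the
DSM target variance iff `s² < |α|·v`. -/
theorem psm_dsm_posterior_variances (μ y v s α : ℝ)
    (hv : 0 < v) (hs : 0 < s) (hα : α ≠ 0) :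
    let f : ℝ → ℝ := fun x =>
      Real.exp (-(x - μ) ^ 2 / (2 * v)) * Real.exp (-(y - α * x) ^ 2 / (2 * s ^ 2))
    let Z : ℝ := ∫ x, f x
    let varOf : (ℝ → ℝ) → ℝ := fun g =>
      (∫ x, (g x - (∫ x', g x' * f x') / Z) ^ 2 * f x) / Z
    varOf (fun x => (α * x - y) / s ^ 2) = α ^ 2 * v / (s ^ 2 * (α ^ 2 * v + s ^ 2)) ∧
    varOf (fun x => -(x - μ) / v) = s ^ 2 / (v * (α ^ 2 * v + s ^ 2)) ∧
    (varOf (fun x => -(x - μ) / v) < varOf (fun x => (α * x - y) / s ^ 2) ↔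
      s ^ 2 < |α| * v) := by
  intro f Z varOf
  set A : ℝ := α ^ 2 * v + s ^ 2 with hAdef
  have hApos : 0 < A := by positivity
  set k : ℝ := A / (2 * v * s ^ 2) with hkdef
  have hk : 0 < k := by positivity
  set m : ℝ := (μ * s ^ 2 + α * v * y) / A with hmdef
  set c : ℝ := -(y - α * μ) ^ 2 / (2 * A) with hcdef
  have hf : ∀ x, f x = Real.exp c * Real.exp (-k * (x - m) ^ 2) := by
    intro x
    show Real.exp (-(x - μ) ^ 2 / (2 * v)) * Real.exp (-(y - α * x) ^ 2 / (2 * s ^ 2)) = _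
    rw [← Real.exp_add, ← Real.exp_add]
    congr 1
    rw [hcdef, hkdef, hmdef, hAdef]
    field_simp
    ring
  have hZ : Z = Real.exp c * Real.sqrt (π / k) := by
    show (∫ x, f x) = _
    simp_rw [hf]
    rw [integral_const_mul, gauss_int0 hk]
  have hZpos : 0 < Z := by
    rw [hZ]; positivity
  have hI1 : (∫ x, x * f x) = m * Z := by
    have e : ∀ x : ℝ, x * f x = Real.exp c * (x * Real.exp (-k * (x - m) ^ 2)) := fun x => by
      rw [hf x]; ring
    simp_rw [e]
    rw [integral_const_mul, gauss_int1 hk, hZ]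
    ring
  have hI2 : (∫ x, (x - m) ^ 2 * f x) = Z / (2 * k) := by
    have e : ∀ x : ℝ, (x - m) ^ 2 * f x
        = Real.exp c * ((x - m) ^ 2 * Real.exp (-k * (x - m) ^ 2)) := fun x => by
      rw [hf x]; ring
    simp_rw [e]
    rw [integral_const_mul, gauss_int2 hk, hZ]
    ring
  have hfint : Integrable f := by
    refine ((gauss_integrable0 hk m).const_mul (Real.exp c)).congr
      (Filter.Eventually.of_forall fun x => ?_)
    rw [hf x]
  have hxfint : Integrable (fun x => x * f x) := by
    refine ((gauss_integrable1 hk m).const_mul (Real.exp c)).congr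
      (Filter.Eventually.of_forall fun x => ?_)
    show Real.exp c * (x * Real.exp (-k * (x - m) ^ 2)) = x * f x
    rw [hf x]; ring
  have hvar : ∀ a b : ℝ, varOf (fun x => a * x + b) = a ^ 2 / (2 * k) := by
    intro a b
    have hm1 : (∫ x', (a * x' + b) * f x') = (a * m + b) * Z := by
      have e : ∀ x' : ℝ, (a * x' + b) * f x' = a * (x' * f x') + b * f x' := fun x' => by ring
      simp_rw [e]
      rw [integral_add (hxfint.const_mul a) (hfint.const_mul b), integral_const_mul,
        integral_const_mul, hI1]
      show a * (m * Z) + b * Z = _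
      ring
    show (∫ x, ((a * x + b) - (∫ x', (a * x' + b) * f x') / Z) ^ 2 * f x) / Z = _
    rw [hm1, mul_div_assoc, div_self hZpos.ne', mul_one]
    have e2 : ∀ x : ℝ, ((a * x + b) - (a * m + b)) ^ 2 * f x = a ^ 2 * ((x - m) ^ 2 * f x) :=
      fun x => by ring
    simp_rw [e2]
    rw [integral_const_mul, hI2]
    field_simp
  have hDSMf : (fun x : ℝ => (α * x - y) / s ^ 2) = fun x => (α / s ^ 2) * x + (-y / s ^ 2) := by
    funext x; ring
  have hPSMf : (fun x : ℝ => -(x - μ) / v) = fun x => (-1 / v) * x + (μ / v) := by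
    funext x; ring
  have h2k : 2 * k = A / (v * s ^ 2) := by rw [hkdef]; ring
  have hDSM : varOf (fun x => (α * x - y) / s ^ 2) = α ^ 2 * v / (s ^ 2 * A) := by
    rw [hDSMf, hvar, h2k]
    field_simp
  have hPSM : varOf (fun x => -(x - μ) / v) = s ^ 2 / (v * A) := by
    rw [hPSMf, hvar, h2k]
    field_simp
  refine ⟨hDSM, hPSM, ?_⟩
  rw [hDSM, hPSM]
  rw [div_lt_div_iff₀ (by positivity) (by positivity)]
  constructor
  · intro h
    have h4' : s ^ 2 * s ^ 2 < α ^ 2 * v * v := by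
      nlinarith [hApos]
    have hab : (|α| * v) * (|α| * v) = α ^ 2 * v * v := by
      linear_combination (v * v) * (sq_abs α)
    have h4 : s ^ 2 * s ^ 2 < (|α| * v) * (|α| * v) := by rw [hab]; exact h4'

    calc s ^ 2 = √(s ^ 2 * s ^ 2) := by
          rw [Real.sqrt_mul_self (by positivity)]
      _ < √((|α| * v) * (|α| * v)) := by
          exact Real.sqrt_lt_sqrt (by positivity) h4
      _ = |α| * v := Real.sqrt_mul_self (by positivity)
  · intro h
    have hab : (|α| * v) * (|α| * v) = α ^ 2 * v * v := by
      linear_combination (v * v) * (sq_abs α)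
    have h4 : s ^ 2 * s ^ 2 < α ^ 2 * v * v := by
      nlinarith [hab, h, sq_nonneg s, mul_pos (abs_pos.2 hα) hv]
    nlinarith [h4, hApos]
end

section
/- Fix μ, y ∈ ℝ and v > 0, and let α, σ : (0, 1] → ℝ be noise schedules with α_t > 0 for all t, α_t → 1 and σ_t → 0 as t → 0⁺. For each t, let π_{y,t} denote the probability measure on ℝ with density proportional to x ↦ exp(−(x − μ)²/(2v)) · exp(−(y − α_t·x)²/(2σ_t²)). Then as t → 0⁺: (i) the variance under π_{y,t} of the DSM target x ↦ (α_t·x − y)/σ_t², which equals α_t²·v/(σ_t²·(α_t²·v + σ_t²)), tends to +∞; (ii) the variance under π_{y,t} of the PSM target x ↦ −(x − μ)/v, which equals σ_t²/(v·(α_t²·v + σ_t²)), tends to 0; and (iii) there exists t₀ > 0 such that for all t ∈ (0, t₀) the PSM target variance is strictly smaller than the DSM target variance. -/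
open MeasureTheory Filter

namespace PsmDsmAux

open Real Set

lemma integral_sq_mul_exp_neg_mul_sq {b : ℝ} (hb : 0 < b) :
    ∫ x : ℝ, x ^ 2 * Real.exp (-b * x ^ 2) = Real.sqrt (π / b) / (2 * b) := by
  have h1 : (∫ x : ℝ, x ^ 2 * Real.exp (-b * x ^ 2))
      = 2 * ∫ x in Ioi (0:ℝ), x ^ 2 * Real.exp (-b * x ^ 2) := by
    rw [← integral_comp_abs (f := fun x => x ^ 2 * Real.exp (-b * x ^ 2))]
    congr 1; funext x; rw [sq_abs]
  have h2 := integral_rpow_mul_exp_neg_mul_rpow (p := 2) (q := 2)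
    (by norm_num) (by norm_num) hb
  rw [show ((2:ℝ)+1)/2 = 1/2 + 1 by norm_num, Real.Gamma_add_one (by norm_num),
    Real.Gamma_one_half_eq] at h2
  simp_rw [Real.rpow_two] at h2
  rw [h1, h2]
  have hsb : (0:ℝ) < Real.sqrt b := Real.sqrt_pos.mpr hb
  have e1 : b ^ (-((2:ℝ) + 1) / 2) = (Real.sqrt b * b)⁻¹ := by
    rw [show (-((2:ℝ)+1)/2) = -(3/2) by ring, Real.rpow_neg hb.le]
    congr 1
    rw [show (3:ℝ)/2 = 1/2 + 1 by ring, Real.rpow_add hb, Real.rpow_one,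
      ← Real.sqrt_eq_rpow]
  have e2 : Real.sqrt (π / b) = Real.sqrt π / Real.sqrt b :=
    Real.sqrt_div pi_pos.le b
  rw [e1, e2]
  have hb' : b ≠ 0 := hb.ne'
  field_simp

lemma exp_form {V : ℝ} (m x : ℝ) : Real.exp (-(x - m) ^ 2 / (2 * V))
    = Real.exp (-(2*V)⁻¹ * (x - m) ^ 2) := by ring_nf

lemma iE {V : ℝ} (hV : 0 < V) (m : ℝ) :
    Integrable (fun x : ℝ => Real.exp (-(x - m) ^ 2 / (2 * V))) := by
  have hb : (0:ℝ) < (2*V)⁻¹ := by positivity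
  simp_rw [exp_form (V := V) m]
  exact (integrable_exp_neg_mul_sq hb).comp_sub_right m

lemma i1 {V : ℝ} (hV : 0 < V) (m : ℝ) :
    Integrable (fun x : ℝ => (x - m) * Real.exp (-(x - m) ^ 2 / (2 * V))) := by
  have hb : (0:ℝ) < (2*V)⁻¹ := by positivity
  simp_rw [exp_form (V := V) m]
  exact (integrable_mul_exp_neg_mul_sq hb).comp_sub_right m

lemma G0 {V : ℝ} (hV : 0 < V) (m : ℝ) :
    ∫ x : ℝ, Real.exp (-(x - m) ^ 2 / (2 * V)) = Real.sqrt (2 * π * V) := by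
  have hb : (0:ℝ) < (2*V)⁻¹ := by positivity
  simp_rw [exp_form (V := V) m]
  rw [integral_sub_right_eq_self (μ := volume) (fun y => Real.exp (-(2*V)⁻¹ * y ^ 2)) m,
    integral_gaussian]
  congr 1
  field_simp

lemma G1 {V : ℝ} (m : ℝ) :
    ∫ x : ℝ, (x - m) * Real.exp (-(x - m) ^ 2 / (2 * V)) = 0 := by
  simp_rw [exp_form (V := V) m]
  rw [integral_sub_right_eq_self (μ := volume) (fun y => y * Real.exp (-(2*V)⁻¹ * y ^ 2)) m]
  simp_rw [neg_mul]
  have h := integral_neg_eq_self (fun y : ℝ => y * Real.exp (-((2*V)⁻¹ * y ^ 2))) volume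
  simp only [neg_sq, neg_mul] at h
  rw [integral_neg] at h
  linarith

lemma G2 {V : ℝ} (hV : 0 < V) (m : ℝ) :
    ∫ x : ℝ, (x - m) ^ 2 * Real.exp (-(x - m) ^ 2 / (2 * V))
      = V * Real.sqrt (2 * π * V) := by
  have hb : (0:ℝ) < (2*V)⁻¹ := by positivity
  simp_rw [exp_form (V := V) m]
  rw [integral_sub_right_eq_self (μ := volume) (fun y => y ^ 2 * Real.exp (-(2*V)⁻¹ * y ^ 2)) m,
    integral_sq_mul_exp_neg_mul_sq hb]
  rw [show π / (2*V)⁻¹ = 2 * π * V by field_simp]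
  rw [show (2 * (2*V)⁻¹) = V⁻¹ by field_simp]
  field_simp

lemma varOf_affine {V : ℝ} (hV : 0 < V) (m c A B : ℝ) (g f : ℝ → ℝ)
    (hg : ∀ x, g x = A * x + B)
    (hf : ∀ x, f x = Real.exp c * Real.exp (-(x - m) ^ 2 / (2 * V))) :
    (∫ x, (g x - (∫ x', g x' * f x') / (∫ x'', f x'')) ^ 2 * f x) / (∫ x'', f x'')
      = A ^ 2 * V := by
  have hS : (0:ℝ) < Real.sqrt (2 * π * V) := Real.sqrt_pos.mpr (by positivity)
  have hN : ∫ x, f x = Real.exp c * Real.sqrt (2 * π * V) := by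
    simp_rw [hf]
    rw [integral_const_mul, G0 hV m]
  have hM : ∫ x, g x * f x = Real.exp c * ((A * m + B) * Real.sqrt (2 * π * V)) := by
    simp_rw [hg, hf]
    have e : ∀ x : ℝ, (A * x + B) * (Real.exp c * Real.exp (-(x - m) ^ 2 / (2 * V)))
        = Real.exp c * (A * ((x - m) * Real.exp (-(x - m) ^ 2 / (2 * V)))
            + (A * m + B) * Real.exp (-(x - m) ^ 2 / (2 * V))) := fun x => by ring
    simp_rw [e]
    rw [integral_const_mul, integral_add ((i1 hV m).const_mul A)
      ((iE hV m).const_mul (A * m + B)), integral_const_mul, integral_const_mul,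
      G1 m, G0 hV m]
    ring
  have hmean : (∫ x', g x' * f x') / (∫ x'', f x'') = A * m + B := by
    rw [hM, hN, mul_div_mul_left _ _ (Real.exp_ne_zero c),
      mul_div_cancel_right₀ _ hS.ne']
  rw [hmean]
  have e2 : ∀ x : ℝ, (g x - (A * m + B)) ^ 2 * f x
      = Real.exp c * (A ^ 2 * ((x - m) ^ 2 * Real.exp (-(x - m) ^ 2 / (2 * V)))) := by
    intro x; rw [hg, hf]; ring
  simp_rw [e2]
  rw [integral_const_mul, integral_const_mul, G2 hV m, hN]
  field_simp

lemma density_eq (μ y v a s : ℝ) (hv : 0 < v) (ha : 0 < a) (hs : 0 < s) (x : ℝ) :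
    Real.exp (-(x - μ) ^ 2 / (2 * v)) * Real.exp (-(y - a * x) ^ 2 / (2 * s ^ 2))
      = Real.exp (-(y - a * μ) ^ 2 / (2 * (a ^ 2 * v + s ^ 2)))
        * Real.exp (-(x - (μ * s ^ 2 + a * y * v) / (a ^ 2 * v + s ^ 2)) ^ 2
            / (2 * (v * s ^ 2 / (a ^ 2 * v + s ^ 2)))) := by
  rw [← Real.exp_add, ← Real.exp_add]
  congr 1
  have hD : (0:ℝ) < a ^ 2 * v + s ^ 2 := by positivity
  field_simp
  ring

end PsmDsmAux

open PsmDsmAux in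
/-- **PSM has lower posterior-target variance than DSM near `t = 0`.**
Fix `μ, y ∈ ℝ`, `v > 0`, and noise schedules `α, σ` with `α_t > 0`, `σ_t > 0` for
`t ∈ (0, 1]`, `α_t → 1` and `σ_t → 0` as `t → 0⁺`.  Let `π_{y,t}` have density
proportional to `x ↦ exp(−(x − μ)²/(2v)) · exp(−(y − α_t x)²/(2σ_t²))`.  Then as
`t → 0⁺`: (i) the variance under `π_{y,t}` of the DSM target `x ↦ (α_t x − y)/σ_t²`,
which equals `α_t² v/(σ_t²(α_t² v + σ_t²))`, tends to `+∞`; (ii) the variance under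
`π_{y,t}` of the PSM target `x ↦ −(x − μ)/v`, which equals `σ_t²/(v(α_t² v + σ_t²))`,
tends to `0`; (iii) there exists `t₀ > 0` such that for all `t ∈ (0, t₀)` the PSM
target variance is strictly smaller than the DSM target variance. -/
theorem psm_dsm_variance_near_zero (μ y v : ℝ) (hv : 0 < v)
    (αf σf : ℝ → ℝ)
    (hαpos : ∀ t ∈ Set.Ioc (0 : ℝ) 1, 0 < αf t)
    (hσpos : ∀ t ∈ Set.Ioc (0 : ℝ) 1, 0 < σf t)
    (hα1 : Tendsto αf (nhdsWithin 0 (Set.Ioi 0)) (nhds 1))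
    (hσ0 : Tendsto σf (nhdsWithin 0 (Set.Ioi 0)) (nhds 0)) :
    let f : ℝ → ℝ → ℝ := fun t x =>
      Real.exp (-(x - μ) ^ 2 / (2 * v)) *
        Real.exp (-(y - αf t * x) ^ 2 / (2 * (σf t) ^ 2))
    let varOf : ℝ → (ℝ → ℝ) → ℝ := fun t g =>
      (∫ x, (g x - (∫ x', g x' * f t x') / (∫ x'', f t x'')) ^ 2 * f t x) /
        (∫ x'', f t x'')
    let dsmVar : ℝ → ℝ := fun t => varOf t (fun x => (αf t * x - y) / (σf t) ^ 2)
    let psmVar : ℝ → ℝ := fun t => varOf t (fun x => -(x - μ) / v)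
    (∀ t ∈ Set.Ioc (0 : ℝ) 1,
        dsmVar t = (αf t) ^ 2 * v / ((σf t) ^ 2 * ((αf t) ^ 2 * v + (σf t) ^ 2)) ∧
        psmVar t = (σf t) ^ 2 / (v * ((αf t) ^ 2 * v + (σf t) ^ 2))) ∧
    Tendsto dsmVar (nhdsWithin 0 (Set.Ioi 0)) atTop ∧
    Tendsto psmVar (nhdsWithin 0 (Set.Ioi 0)) (nhds 0) ∧
    ∃ t₀ > (0 : ℝ), ∀ t ∈ Set.Ioo (0 : ℝ) t₀, psmVar t < dsmVar t := by
  intro f varOf dsmVar psmVar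
  have key : ∀ t ∈ Set.Ioc (0 : ℝ) 1,
      dsmVar t = (αf t) ^ 2 * v / ((σf t) ^ 2 * ((αf t) ^ 2 * v + (σf t) ^ 2)) ∧
      psmVar t = (σf t) ^ 2 / (v * ((αf t) ^ 2 * v + (σf t) ^ 2)) := by
    intro t ht
    have ha : 0 < αf t := hαpos t ht
    have hs : 0 < σf t := hσpos t ht
    set a := αf t
    set s := σf t
    have hD : (0:ℝ) < a ^ 2 * v + s ^ 2 := by positivity
    have hV : (0:ℝ) < v * s ^ 2 / (a ^ 2 * v + s ^ 2) := by positivity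
    have hf : ∀ x, f t x
        = Real.exp (-(y - a * μ) ^ 2 / (2 * (a ^ 2 * v + s ^ 2)))
          * Real.exp (-(x - (μ * s ^ 2 + a * y * v) / (a ^ 2 * v + s ^ 2)) ^ 2
              / (2 * (v * s ^ 2 / (a ^ 2 * v + s ^ 2)))) := fun x =>
      density_eq μ y v a s hv ha hs x
    constructor
    · have h1 : dsmVar t = (a / s ^ 2) ^ 2 * (v * s ^ 2 / (a ^ 2 * v + s ^ 2)) :=
        varOf_affine hV _ _ (a / s ^ 2) (-y / s ^ 2) _ _
          (fun x => by show (a * x - y) / s ^ 2 = a / s ^ 2 * x + -y / s ^ 2; ring) hf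
      rw [h1]
      field_simp
    · have h1 : psmVar t = (-1 / v) ^ 2 * (v * s ^ 2 / (a ^ 2 * v + s ^ 2)) :=
        varOf_affine hV _ _ (-1 / v) (μ / v) _ _
          (fun x => by field_simp; ring) hf
      rw [h1]
      field_simp
  have hmem : Set.Ioc (0:ℝ) 1 ∈ nhdsWithin (0:ℝ) (Set.Ioi 0) :=
    Ioc_mem_nhdsGT one_pos
  have hnum : Tendsto (fun t => (αf t) ^ 2 * v) (nhdsWithin 0 (Set.Ioi 0)) (nhds v) := by
    simpa using (hα1.pow 2).mul_const v
  have hden : Tendsto (fun t => (αf t) ^ 2 * v + (σf t) ^ 2)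
      (nhdsWithin 0 (Set.Ioi 0)) (nhds v) := by
    simpa using hnum.add (hσ0.pow 2)
  have hd : Tendsto dsmVar (nhdsWithin 0 (Set.Ioi 0)) atTop := by
    have h1 : Tendsto (fun t => (αf t) ^ 2 * v / ((αf t) ^ 2 * v + (σf t) ^ 2))
        (nhdsWithin 0 (Set.Ioi 0)) (nhds 1) := by
      have := hnum.div hden hv.ne'
      rw [div_self hv.ne'] at this; exact this
    have hs2 : Tendsto (fun t => (σf t) ^ 2) (nhdsWithin 0 (Set.Ioi 0))
        (nhdsWithin 0 (Set.Ioi 0)) := by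
      rw [tendsto_nhdsWithin_iff]
      refine ⟨by simpa using hσ0.pow 2, ?_⟩
      filter_upwards [hmem] with t ht
      exact pow_pos (hσpos t ht) 2
    have h2 : Tendsto (fun t => (((σf t) ^ 2)⁻¹ : ℝ)) (nhdsWithin 0 (Set.Ioi 0)) atTop :=
      tendsto_inv_nhdsGT_zero.comp hs2
    have h3 := h1.pos_mul_atTop one_pos h2
    refine h3.congr' ?_
    filter_upwards [hmem] with t ht
    rw [(key t ht).1, mul_comm ((σf t)^2) _, ← div_div, div_eq_mul_inv,
      div_eq_mul_inv]
  have hp : Tendsto psmVar (nhdsWithin 0 (Set.Ioi 0)) (nhds 0) := by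
    have h1 : Tendsto (fun t => (σf t) ^ 2 / (v * ((αf t) ^ 2 * v + (σf t) ^ 2)))
        (nhdsWithin 0 (Set.Ioi 0)) (nhds 0) := by
      have hden2 : Tendsto (fun t => v * ((αf t) ^ 2 * v + (σf t) ^ 2))
          (nhdsWithin 0 (Set.Ioi 0)) (nhds (v * v)) := tendsto_const_nhds.mul hden
      have := (hσ0.pow 2).div hden2 (by positivity : (0:ℝ) < v*v).ne'
      rw [show (0:ℝ) ^ 2 / (v * v) = 0 by simp] at this; exact this
    refine Tendsto.congr' ?_ h1
    filter_upwards [hmem] with t ht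
    exact ((key t ht).2).symm
  refine ⟨key, hd, hp, ?_⟩
  have hgt : ∀ᶠ t in nhdsWithin (0:ℝ) (Set.Ioi 0), 1 < dsmVar t :=
    hd.eventually_gt_atTop 1
  have hlt : ∀ᶠ t in nhdsWithin (0:ℝ) (Set.Ioi 0), psmVar t < 1 :=
    hp.eventually_lt_const one_pos
  have hboth : ∀ᶠ t in nhdsWithin (0:ℝ) (Set.Ioi 0), psmVar t < dsmVar t := by
    filter_upwards [hgt, hlt] with t h1 h2
    linarith
  obtain ⟨u, hu, hsub⟩ := mem_nhdsGT_iff_exists_Ioo_subset.mp hboth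
  exact ⟨u, hu, fun t ht => hsub ht⟩
end

section
/- Let p, q : ℝ^d → (0, ∞) be continuously differentiable probability densities whose scores ∇ log p and ∇ log q are continuous and bounded on ℝ^d, and suppose in addition that p and q are continuous and bounded. Fix x ∈ ℝ^d with (∇ log q)(x) ≠ (∇ log p)(x). For σ > 0 define the posterior densities q_σ(y | x) = q(y)·exp(−‖x − y‖²/(2σ²)) / ∫ q(z)·exp(−‖x − z‖²/(2σ²)) dz and p_σ(y | x) analogously with q replaced by p. Then there exists σ₀ > 0 such that for all σ ∈ (0, σ₀): ‖∫ (∇ log p)(y)·q_σ(y | x) dy − ∫ (∇ log p)(y)·p_σ(y | x) dy‖ < ‖∫ (∇ log q)(y)·q_σ(y | x) dy − ∫ (∇ log p)(y)·p_σ(y | x) dy‖. That is, at sufficiently small noise levels, the PSM label (posterior expectation under the biased data posterior q_σ(· | x) of the true score ∇ log p) is strictly closer to the ground-truth score label (posterior expectation under the true posterior p_σ(· | x) of ∇ log p) than the DSM label (posterior expectation under q_σ(· | x) of the data score ∇ log q). -/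
open MeasureTheory Filter

open MeasureTheory Filter
open scoped Topology

lemma psm_aux_tendsto (d : ℕ) (r : EuclideanSpace ℝ (Fin d) → ℝ)
    (hrc : Continuous r) (hrpos : ∀ y, 0 < r y) (hrI : Integrable r)
    (hrP : ∫ y, r y = 1)
    (g : EuclideanSpace ℝ (Fin d) → EuclideanSpace ℝ (Fin d))
    (hgc : Continuous g) (β : ℝ) (hgb : ∀ y, ‖g y‖ ≤ β)
    (x : EuclideanSpace ℝ (Fin d)) :
    Tendsto (fun σ : ℝ => ∫ y, ((r y * Real.exp (-‖x - y‖ ^ 2 / (2 * σ ^ 2))) /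
        ∫ z, r z * Real.exp (-‖x - z‖ ^ 2 / (2 * σ ^ 2))) • g y)
      (𝓝[>] (0:ℝ)) (𝓝 (g x)) := by
  have hβ0 : 0 ≤ β := le_trans (norm_nonneg _) (hgb x)
  rw [Metric.tendsto_nhds]
  intro ε hε
  obtain ⟨δ, hδ, hδg⟩ := Metric.continuous_iff.mp hgc x (ε/2) (half_pos hε)
  obtain ⟨y₀, hy₀, hmin⟩ := (isCompact_closedBall x (δ/2)).exists_isMinOn
      ⟨x, Metric.mem_closedBall_self (by positivity)⟩ hrc.continuousOn
  set m := r y₀ with hm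
  have hm0 : 0 < m := hrpos y₀
  set V := (volume (Metric.ball x (δ/2))).toReal with hV
  have hV0 : 0 < V := by
    refine ENNReal.toReal_pos (Metric.measure_ball_pos volume x (by positivity)).ne'
      (measure_ball_lt_top).ne
  set c := m * V with hc
  have hc0 : 0 < c := mul_pos hm0 hV0
  set a := 3 * δ ^ 2 / 8 with ha
  have ha0 : 0 < a := by positivity
  -- the error term tends to 0
  have hlim : Tendsto (fun σ : ℝ => (2 * β / c) * Real.exp (-(a / σ ^ 2)))
      (𝓝[>] (0:ℝ)) (𝓝 0) := by
    have h1 : Tendsto (fun σ : ℝ => σ ^ 2) (𝓝[>] (0:ℝ)) (𝓝[>] (0:ℝ)) := by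
      apply tendsto_nhdsWithin_of_tendsto_nhds_of_eventually_within
      · have := (continuous_pow 2).tendsto (0:ℝ)
        simpa using this.mono_left nhdsWithin_le_nhds
      · exact eventually_nhdsWithin_of_forall (fun σ hσ => Set.mem_Ioi.mpr (pow_pos (Set.mem_Ioi.mp hσ) 2))
    have h3 : Tendsto (fun σ : ℝ => (σ ^ 2)⁻¹) (𝓝[>] (0:ℝ)) atTop :=
      tendsto_inv_nhdsGT_zero.comp h1
    have h4 : Tendsto (fun σ : ℝ => a * (σ ^ 2)⁻¹) (𝓝[>] (0:ℝ)) atTop :=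
      h3.const_mul_atTop ha0
    have h5 : Tendsto (fun σ : ℝ => -(a / σ ^ 2)) (𝓝[>] (0:ℝ)) atBot := by
      simp only [div_eq_mul_inv]
      exact tendsto_neg_atTop_atBot.comp h4
    have h6 : Tendsto (fun σ : ℝ => Real.exp (-(a / σ ^ 2))) (𝓝[>] (0:ℝ)) (𝓝 0) :=
      Real.tendsto_exp_atBot.comp h5
    simpa using h6.const_mul (2 * β / c)
  have hev : ∀ᶠ σ in 𝓝[>] (0:ℝ), (2 * β / c) * Real.exp (-(a / σ ^ 2)) < ε / 2 :=
    hlim.eventually_lt_const (half_pos hε)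
  filter_upwards [self_mem_nhdsWithin, hev] with σ hσ hσe
  have hσ0 : (0:ℝ) < σ := hσ
  have hσ2 : (0:ℝ) < 2 * σ ^ 2 := by positivity
  -- basic facts about the Gaussian factor
  have hGc : Continuous (fun y : EuclideanSpace ℝ (Fin d) =>
      Real.exp (-‖x - y‖ ^ 2 / (2 * σ ^ 2))) := by
    apply Real.continuous_exp.comp
    exact (((continuous_const.sub continuous_id).norm.pow 2).neg).div_const _
  have hGpos : ∀ y : EuclideanSpace ℝ (Fin d),
      0 < Real.exp (-‖x - y‖ ^ 2 / (2 * σ ^ 2)) := fun y => Real.exp_pos _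
  have hGle1 : ∀ y : EuclideanSpace ℝ (Fin d),
      Real.exp (-‖x - y‖ ^ 2 / (2 * σ ^ 2)) ≤ 1 := by
    intro y
    rw [Real.exp_le_one_iff]
    apply div_nonpos_of_nonpos_of_nonneg
    · simpa using sq_nonneg ‖x - y‖
    · exact hσ2.le
  have hGI : Integrable (fun y => r y * Real.exp (-‖x - y‖ ^ 2 / (2 * σ ^ 2))) := by
    refine hrI.mono (hrc.mul hGc).aestronglyMeasurable ?_
    filter_upwards with y
    rw [Real.norm_eq_abs, Real.norm_eq_abs, abs_mul,
      abs_of_nonneg (hrpos y).le, abs_of_nonneg (hGpos y).le]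
    calc r y * Real.exp (-‖x - y‖ ^ 2 / (2 * σ ^ 2)) ≤ r y * 1 :=
          mul_le_mul_of_nonneg_left (hGle1 y) (hrpos y).le
      _ = r y := mul_one _
  set Z := ∫ z, r z * Real.exp (-‖x - z‖ ^ 2 / (2 * σ ^ 2)) with hZ
  set e₈ := Real.exp (-(δ/2) ^ 2 / (2 * σ ^ 2)) with he₈
  have he₈0 : 0 < e₈ := Real.exp_pos _
  -- lower bound on Z
  have hZge : c * e₈ ≤ Z := by
    have hball : ∀ y ∈ Metric.ball x (δ/2),
        m * e₈ ≤ r y * Real.exp (-‖x - y‖ ^ 2 / (2 * σ ^ 2)) := by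
      intro y hy
      have hyx : dist y x < δ/2 := hy
      have h1 : m ≤ r y := hmin (Metric.ball_subset_closedBall hy)
      have hxy : ‖x - y‖ ≤ δ/2 := by
        rw [← dist_eq_norm, dist_comm]
        exact hyx.le
      have h2 : e₈ ≤ Real.exp (-‖x - y‖ ^ 2 / (2 * σ ^ 2)) := by
        apply Real.exp_le_exp.mpr
        apply div_le_div_of_nonneg_right ?_ hσ2.le
        have := pow_le_pow_left₀ (norm_nonneg (x - y)) hxy 2
        linarith
      exact mul_le_mul h1 h2 he₈0.le (hrpos y).le
    have hlow := setIntegral_ge_of_const_le measurableSet_ball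
      measure_ball_lt_top.ne hball hGI.integrableOn
    have hup : ∫ y in Metric.ball x (δ/2),
          r y * Real.exp (-‖x - y‖ ^ 2 / (2 * σ ^ 2)) ≤ Z :=
      setIntegral_le_integral hGI
        (Eventually.of_forall (fun y => mul_nonneg (hrpos y).le (hGpos y).le))
    calc c * e₈ = (m * e₈) * V := by ring
      _ ≤ _ := le_trans (by rw [smul_eq_mul, mul_comm] at hlow; exact hlow) hup
  have hZ0 : 0 < Z := lt_of_lt_of_le (mul_pos hc0 he₈0) hZge
  -- the weights integrate to 1
  have hwI : Integrable (fun y => (r y * Real.exp (-‖x - y‖ ^ 2 / (2 * σ ^ 2))) / Z) :=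
    hGI.div_const Z
  have hweq : (∫ y, (r y * Real.exp (-‖x - y‖ ^ 2 / (2 * σ ^ 2))) / Z) = 1 := by
    rw [integral_div, ← hZ, div_self hZ0.ne']
  have hwpos : ∀ y, 0 ≤ (r y * Real.exp (-‖x - y‖ ^ 2 / (2 * σ ^ 2))) / Z :=
    fun y => div_nonneg (mul_nonneg (hrpos y).le (hGpos y).le) hZ0.le
  -- integrability of the integrands
  have hI1 : Integrable (fun y =>
      ((r y * Real.exp (-‖x - y‖ ^ 2 / (2 * σ ^ 2))) / Z) • g y) := by
    refine (hrI.const_mul (β / Z)).mono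
      (((hrc.mul hGc).div_const Z).smul hgc).aestronglyMeasurable ?_
    filter_upwards with y
    rw [norm_smul, Real.norm_eq_abs, Real.norm_eq_abs,
      abs_of_nonneg (hwpos y), abs_of_nonneg (mul_nonneg (div_nonneg hβ0 hZ0.le) (hrpos y).le)]
    calc (r y * Real.exp (-‖x - y‖ ^ 2 / (2 * σ ^ 2))) / Z * ‖g y‖
        ≤ (r y * 1) / Z * β := by
          apply mul_le_mul _ (hgb y) (norm_nonneg _) _
          · exact div_le_div_of_nonneg_right (mul_le_mul_of_nonneg_left (hGle1 y) (hrpos y).le) hZ0.le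
          · exact div_nonneg (mul_nonneg (hrpos y).le zero_le_one) hZ0.le
      _ = β / Z * r y := by ring
  have hI3 : Integrable (fun y =>
      ((r y * Real.exp (-‖x - y‖ ^ 2 / (2 * σ ^ 2))) / Z) • g x) := hwI.smul_const (g x)
  -- the key identity
  have key : (∫ y, ((r y * Real.exp (-‖x - y‖ ^ 2 / (2 * σ ^ 2))) / Z) • g y) - g x
      = ∫ y, ((r y * Real.exp (-‖x - y‖ ^ 2 / (2 * σ ^ 2))) / Z) • (g y - g x) := by
    have h0 : (∫ y, ((r y * Real.exp (-‖x - y‖ ^ 2 / (2 * σ ^ 2))) / Z) • g x) = g x := by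
      rw [integral_smul_const, hweq, one_smul]
    rw [eq_comm]
    calc (∫ y, ((r y * Real.exp (-‖x - y‖ ^ 2 / (2 * σ ^ 2))) / Z) • (g y - g x))
        = ∫ y, (((r y * Real.exp (-‖x - y‖ ^ 2 / (2 * σ ^ 2))) / Z) • g y
            - ((r y * Real.exp (-‖x - y‖ ^ 2 / (2 * σ ^ 2))) / Z) • g x) := by
          simp only [smul_sub]
      _ = _ := by rw [integral_sub hI1 hI3, h0]
  -- the bound function
  set e' := Real.exp (-δ ^ 2 / (2 * σ ^ 2)) with he'
  have he'0 : 0 < e' := Real.exp_pos _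
  have hBI : Integrable (fun y =>
      (ε/2) * ((r y * Real.exp (-‖x - y‖ ^ 2 / (2 * σ ^ 2))) / Z)
        + (2 * β / Z * e') * r y) := by
    exact (hwI.const_mul (ε/2)).add (hrI.const_mul _)
  have hBeq : (∫ y, ((ε/2) * ((r y * Real.exp (-‖x - y‖ ^ 2 / (2 * σ ^ 2))) / Z)
        + (2 * β / Z * e') * r y)) = ε/2 + 2 * β / Z * e' := by
    rw [integral_add (hwI.const_mul (ε/2)) (hrI.const_mul _),
      integral_const_mul, integral_const_mul, hweq, hrP, mul_one, mul_one]
  have hptw : ∀ y, ‖((r y * Real.exp (-‖x - y‖ ^ 2 / (2 * σ ^ 2))) / Z) • (g y - g x)‖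
      ≤ (ε/2) * ((r y * Real.exp (-‖x - y‖ ^ 2 / (2 * σ ^ 2))) / Z)
        + (2 * β / Z * e') * r y := by
    intro y
    rw [norm_smul, Real.norm_eq_abs, abs_of_nonneg (hwpos y)]
    by_cases hy : dist y x < δ
    · have h1 : ‖g y - g x‖ ≤ ε/2 := by
        rw [← dist_eq_norm]; exact (hδg y hy).le
      have : (r y * Real.exp (-‖x - y‖ ^ 2 / (2 * σ ^ 2))) / Z * ‖g y - g x‖
          ≤ (ε/2) * ((r y * Real.exp (-‖x - y‖ ^ 2 / (2 * σ ^ 2))) / Z) := by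
        rw [mul_comm ((r y * Real.exp (-‖x - y‖ ^ 2 / (2 * σ ^ 2))) / Z)]
        exact mul_le_mul_of_nonneg_right h1 (hwpos y)
      have h2 : 0 ≤ (2 * β / Z * e') * r y := mul_nonneg (by positivity) (hrpos y).le
      linarith
    · push_neg at hy
      have hxy : δ ≤ ‖x - y‖ := by
        rw [← dist_eq_norm, dist_comm]; exact hy
      have hG' : Real.exp (-‖x - y‖ ^ 2 / (2 * σ ^ 2)) ≤ e' := by
        apply Real.exp_le_exp.mpr
        apply div_le_div_of_nonneg_right ?_ hσ2.le
        have := pow_le_pow_left₀ hδ.le hxy 2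
        linarith
      have h1 : ‖g y - g x‖ ≤ 2 * β := by
        calc ‖g y - g x‖ ≤ ‖g y‖ + ‖g x‖ := norm_sub_le _ _
          _ ≤ β + β := add_le_add (hgb y) (hgb x)
          _ = 2 * β := by ring
      have h2 : (r y * Real.exp (-‖x - y‖ ^ 2 / (2 * σ ^ 2))) / Z * ‖g y - g x‖
          ≤ (r y * e') / Z * (2 * β) := by
        apply mul_le_mul _ h1 (norm_nonneg _)
          (div_nonneg (mul_nonneg (hrpos y).le he'0.le) hZ0.le)
        exact div_le_div_of_nonneg_right (mul_le_mul_of_nonneg_left hG' (hrpos y).le) hZ0.le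
      have h3 : 0 ≤ (ε/2) * ((r y * Real.exp (-‖x - y‖ ^ 2 / (2 * σ ^ 2))) / Z) := by
        have := hwpos y; positivity
      have h4 : (r y * e') / Z * (2 * β) = (2 * β / Z * e') * r y := by ring
      linarith
  -- put things together
  have hnorm : ‖(∫ y, ((r y * Real.exp (-‖x - y‖ ^ 2 / (2 * σ ^ 2))) / Z) • g y) - g x‖
      ≤ ε/2 + 2 * β / Z * e' := by
    rw [key, ← hBeq]
    exact norm_integral_le_of_norm_le hBI (Eventually.of_forall hptw)
  -- bound the error term
  have herr : 2 * β / Z * e' ≤ (2 * β / c) * Real.exp (-(a / σ ^ 2)) := by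
    have h1 : 2 * β / Z ≤ 2 * β / (c * e₈) := by
      apply div_le_div_of_nonneg_left (by positivity) (mul_pos hc0 he₈0) hZge
    have h2 : 2 * β / (c * e₈) * e' = (2 * β / c) * (e' / e₈) := by
      field_simp
    have h3 : e' / e₈ = Real.exp (-(a / σ ^ 2)) := by
      rw [he', he₈, ← Real.exp_sub]
      congr 1
      field_simp [ha]
      ring
    calc 2 * β / Z * e' ≤ 2 * β / (c * e₈) * e' :=
        mul_le_mul_of_nonneg_right h1 he'0.le
      _ = (2 * β / c) * Real.exp (-(a / σ ^ 2)) := by rw [h2, h3]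
  rw [dist_eq_norm]
  calc ‖(∫ y, ((r y * Real.exp (-‖x - y‖ ^ 2 / (2 * σ ^ 2))) / Z) • g y) - g x‖
      ≤ ε/2 + 2 * β / Z * e' := hnorm
    _ ≤ ε/2 + (2 * β / c) * Real.exp (-(a / σ ^ 2)) := by linarith
    _ < ε/2 + ε/2 := by linarith
    _ = ε := by ring

lemma psm_gradient_log_continuous (d : ℕ) (p : EuclideanSpace ℝ (Fin d) → ℝ)
    (hp : ContDiff ℝ 1 p) (hppos : ∀ y, 0 < p y) :
    Continuous (gradient (fun z => Real.log (p z))) := by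
  have hlog : ContDiff ℝ 1 (fun z => Real.log (p z)) :=
    hp.log (fun z => (hppos z).ne')
  have hf : Continuous (fderiv ℝ (fun z => Real.log (p z))) :=
    hlog.continuous_fderiv one_ne_zero
  exact (InnerProductSpace.toDual ℝ (EuclideanSpace ℝ (Fin d))).symm.continuous.comp hf

/-- **PSM label is closer to the ground truth than the DSM label at small noise.**
Let `p, q : ℝ^d → (0, ∞)` be `C¹` probability densities, with `p`, `q` and the
scores `∇ log p`, `∇ log q` bounded, and fix `x` with `(∇ log q)(x) ≠ (∇ log p)(x)`.
For `σ > 0` let `q_σ(· | x)` and `p_σ(· | x)` be the Gaussian posteriors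
`r_σ(y | x) ∝ r(y) exp(−‖x − y‖²/(2σ²))`.  Then there exists `σ₀ > 0` such that for
all `σ ∈ (0, σ₀)`,
`‖E_{q_σ(·|x)}[∇ log p] − E_{p_σ(·|x)}[∇ log p]‖ < ‖E_{q_σ(·|x)}[∇ log q] − E_{p_σ(·|x)}[∇ log p]‖`. -/
theorem psm_label_closer_than_dsm_label (d : ℕ)
    (p q : EuclideanSpace ℝ (Fin d) → ℝ)
    (hp : ContDiff ℝ 1 p) (hq : ContDiff ℝ 1 q)
    (hppos : ∀ y, 0 < p y) (hqpos : ∀ y, 0 < q y)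
    (hpI : Integrable p) (hqI : Integrable q)
    (hpP : ∫ y, p y = 1) (hqP : ∫ y, q y = 1)
    (hpb : ∃ C, ∀ y, p y ≤ C) (hqb : ∃ C, ∀ y, q y ≤ C)
    (hspb : ∃ C, ∀ y, ‖gradient (fun z => Real.log (p z)) y‖ ≤ C)
    (hsqb : ∃ C, ∀ y, ‖gradient (fun z => Real.log (q z)) y‖ ≤ C)
    (x : EuclideanSpace ℝ (Fin d))
    (hne : gradient (fun z => Real.log (q z)) x ≠ gradient (fun z => Real.log (p z)) x) :
    ∃ σ₀ > (0 : ℝ), ∀ σ ∈ Set.Ioo (0 : ℝ) σ₀,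
      ‖(∫ y, ((q y * Real.exp (-‖x - y‖ ^ 2 / (2 * σ ^ 2))) /
              ∫ z, q z * Real.exp (-‖x - z‖ ^ 2 / (2 * σ ^ 2))) •
            gradient (fun z => Real.log (p z)) y)
        - ∫ y, ((p y * Real.exp (-‖x - y‖ ^ 2 / (2 * σ ^ 2))) /
              ∫ z, p z * Real.exp (-‖x - z‖ ^ 2 / (2 * σ ^ 2))) •
            gradient (fun z => Real.log (p z)) y‖
      < ‖(∫ y, ((q y * Real.exp (-‖x - y‖ ^ 2 / (2 * σ ^ 2))) /
              ∫ z, q z * Real.exp (-‖x - z‖ ^ 2 / (2 * σ ^ 2))) •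
            gradient (fun z => Real.log (q z)) y)
        - ∫ y, ((p y * Real.exp (-‖x - y‖ ^ 2 / (2 * σ ^ 2))) /
              ∫ z, p z * Real.exp (-‖x - z‖ ^ 2 / (2 * σ ^ 2))) •
            gradient (fun z => Real.log (p z)) y‖ := by
  obtain ⟨Cp, hCp⟩ := hspb
  obtain ⟨Cq, hCq⟩ := hsqb
  have hgpc := psm_gradient_log_continuous d p hp hppos
  have hgqc := psm_gradient_log_continuous d q hq hqpos
  have Tqp := psm_aux_tendsto d q hq.continuous hqpos hqI hqP
    (gradient (fun z => Real.log (p z))) hgpc Cp hCp x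
  have Tpp := psm_aux_tendsto d p hp.continuous hppos hpI hpP
    (gradient (fun z => Real.log (p z))) hgpc Cp hCp x
  have Tqq := psm_aux_tendsto d q hq.continuous hqpos hqI hqP
    (gradient (fun z => Real.log (q z))) hgqc Cq hCq x
  have h1 : Tendsto (fun σ : ℝ =>
      ‖(∫ y, ((q y * Real.exp (-‖x - y‖ ^ 2 / (2 * σ ^ 2))) /
              ∫ z, q z * Real.exp (-‖x - z‖ ^ 2 / (2 * σ ^ 2))) •
            gradient (fun z => Real.log (p z)) y)
        - ∫ y, ((p y * Real.exp (-‖x - y‖ ^ 2 / (2 * σ ^ 2))) /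
              ∫ z, p z * Real.exp (-‖x - z‖ ^ 2 / (2 * σ ^ 2))) •
            gradient (fun z => Real.log (p z)) y‖) (𝓝[>] (0:ℝ)) (𝓝 0) := by
    have := (Tqp.sub Tpp).norm
    simpa using this
  have h2 : Tendsto (fun σ : ℝ =>
      ‖(∫ y, ((q y * Real.exp (-‖x - y‖ ^ 2 / (2 * σ ^ 2))) /
              ∫ z, q z * Real.exp (-‖x - z‖ ^ 2 / (2 * σ ^ 2))) •
            gradient (fun z => Real.log (q z)) y)
        - ∫ y, ((p y * Real.exp (-‖x - y‖ ^ 2 / (2 * σ ^ 2))) /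
              ∫ z, p z * Real.exp (-‖x - z‖ ^ 2 / (2 * σ ^ 2))) •
            gradient (fun z => Real.log (p z)) y‖) (𝓝[>] (0:ℝ))
      (𝓝 ‖gradient (fun z => Real.log (q z)) x - gradient (fun z => Real.log (p z)) x‖) :=
    (Tqq.sub Tpp).norm
  have hD : (0:ℝ) < ‖gradient (fun z => Real.log (q z)) x
      - gradient (fun z => Real.log (p z)) x‖ := by
    rw [norm_pos_iff]
    exact sub_ne_zero_of_ne hne
  have hdiff := h2.sub h1
  rw [sub_zero] at hdiff
  have hevent := hdiff.eventually_const_lt hD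
  have hevent2 : ∀ᶠ σ in 𝓝[>] (0:ℝ),
      ‖(∫ y, ((q y * Real.exp (-‖x - y‖ ^ 2 / (2 * σ ^ 2))) /
              ∫ z, q z * Real.exp (-‖x - z‖ ^ 2 / (2 * σ ^ 2))) •
            gradient (fun z => Real.log (p z)) y)
        - ∫ y, ((p y * Real.exp (-‖x - y‖ ^ 2 / (2 * σ ^ 2))) /
              ∫ z, p z * Real.exp (-‖x - z‖ ^ 2 / (2 * σ ^ 2))) •
            gradient (fun z => Real.log (p z)) y‖
      < ‖(∫ y, ((q y * Real.exp (-‖x - y‖ ^ 2 / (2 * σ ^ 2))) /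
              ∫ z, q z * Real.exp (-‖x - z‖ ^ 2 / (2 * σ ^ 2))) •
            gradient (fun z => Real.log (q z)) y)
        - ∫ y, ((p y * Real.exp (-‖x - y‖ ^ 2 / (2 * σ ^ 2))) /
              ∫ z, p z * Real.exp (-‖x - z‖ ^ 2 / (2 * σ ^ 2))) •
            gradient (fun z => Real.log (p z)) y‖ := by
    filter_upwards [hevent] with σ hσ
    linarith
  obtain ⟨u, hu, hsub⟩ := mem_nhdsGT_iff_exists_Ioo_subset.mp hevent2
  exact ⟨u, hu, fun σ hσ => hsub hσ⟩
end
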